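/- arXiv:1612.07904 — 2 statements merged into one kernel-verified Lean document; each statement's English description precedes it below -/
import Mathlib

section
/- Let X be a finite n-dimensional simplicial complex satisfying (⋆), v a vertex, and τ_v, ρ_v, d_v, δ_v, Δ_v the local operators on the link Lk(v). Then for f ∈ C^i(X): τ_v d ρ_v f = −d_v τ_v f (for i ≥ 1), τ_v δ f = −δ_v τ_v f (for i ≥ 2), and τ_v Δ ρ_v f = Δ_v τ_v f (for i ≥ 1). Consequently (Δ ρ_v f, ρ_v f) = (Δ_v τ_v f, τ_v f)_v. -/
open Finset
open scoped Classical

noncomputable section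

variable {V : Type*} [Fintype V] [DecidableEq V]

/-- A finite abstract simplicial complex on the vertex set `V`:
a collection of nonempty finite sets closed under nonempty subsets. -/
def IsComplex (K : Finset (Finset V)) : Prop :=
  ∀ s ∈ K, s.Nonempty ∧ ∀ t ⊆ s, t.Nonempty → t ∈ K

/-- The underlying vertex set of a tuple. -/
def tupImage {m : ℕ} (x : Fin m → V) : Finset V := Finset.image x Finset.univ

/-- `x` is (an ordering of) a simplex of `K`. -/
def IsSimplex (K : Finset (Finset V)) {m : ℕ} (x : Fin m → V) : Prop :=
  Function.Injective x ∧ tupImage x ∈ K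

/-- An alternating real cochain supported on the simplices of `K`;
tuples have `m` entries, so this is the space `C^(m-1)(K)`. -/
def IsCochain (K : Finset (Finset V)) {m : ℕ} (f : (Fin m → V) → ℝ) : Prop :=
  (∀ x, ¬ IsSimplex K x → f x = 0) ∧
  ∀ (x : Fin m → V) (π : Equiv.Perm (Fin m)),
    f (x ∘ π) = ((Equiv.Perm.sign π : ℤ) : ℝ) * f x

/-- The simplicial coboundary operator. -/
def dOp {m : ℕ} (f : (Fin m → V) → ℝ) : (Fin (m + 1) → V) → ℝ :=
  fun x => ∑ j : Fin (m + 1), (-1 : ℝ) ^ (j : ℕ) * f (x ∘ j.succAbove)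

/-- The weighted inner product `(f,g) = ∑_{σ} w(σ) f(σ) g(σ)`, the sum being over
non-oriented simplices; it is realized as a sum over all tuples divided by `m!`. -/
def oinner (w : Finset V → ℝ) {m : ℕ} (f g : (Fin m → V) → ℝ) : ℝ :=
  (∑ x : Fin m → V, w (tupImage x) * f x * g x) / (Nat.factorial m)

/-- The operator `δ`: `δf(s) = ∑_{v : [v,s] ∈ K} (w([v,s])/w(s)) f([v,s])`. -/
def deltaOp (K : Finset (Finset V)) (w : Finset V → ℝ) {m : ℕ}
    (f : (Fin (m + 1) → V) → ℝ) : (Fin m → V) → ℝ :=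
  fun x => ∑ v : V,
    if IsSimplex K (Fin.cons v x) then
      (w (insert v (tupImage x)) / w (tupImage x)) * f (Fin.cons v x)
    else 0

/-- Restriction of a function to the simplices of `K` (extension by zero). -/
def simpRestrict (K : Finset (Finset V)) {m : ℕ} (f : (Fin m → V) → ℝ) :
    (Fin m → V) → ℝ :=
  fun x => if IsSimplex K x then f x else 0

/-- The number of `n`-dimensional simplices of `K` containing `s`. -/
def wN (K : Finset (Finset V)) (n : ℕ) (s : Finset V) : ℕ :=
  (K.filter fun t => s ⊆ t ∧ t.card = n + 1).card

/-- Real-valued version of `wN`. -/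
def wR (K : Finset (Finset V)) (n : ℕ) : Finset V → ℝ := fun s => (wN K n s : ℝ)

/-- Property `(⋆)`: every simplex of `K` is a face of some `n`-simplex. -/
def StarProp (K : Finset (Finset V)) (n : ℕ) : Prop :=
  ∀ s ∈ K, ∃ t ∈ K, s ⊆ t ∧ t.card = n + 1

/-- `X` has dimension (at most) `n`. -/
def DimLE (K : Finset (Finset V)) (n : ℕ) : Prop :=
  ∀ s ∈ K, s.card ≤ n + 1

/-- Restriction to the star of a vertex `v`. -/
def rhoOp (v : V) {m : ℕ} (f : (Fin m → V) → ℝ) : (Fin m → V) → ℝ :=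
  fun x => if v ∈ tupImage x then f x else 0

/-- The link of a vertex. -/
def linkK (K : Finset (Finset V)) (v : V) : Finset (Finset V) :=
  K.filter fun s => v ∉ s ∧ insert v s ∈ K

/-- The operator `τ_v`: `(τ_v f)(s) = f([v,s])` for `s` in the link of `v`, zero otherwise. -/
def tauOp (K : Finset (Finset V)) (v : V) {m : ℕ}
    (f : (Fin (m + 1) → V) → ℝ) : (Fin m → V) → ℝ :=
  fun x => if IsSimplex K (Fin.cons v x) then f (Fin.cons v x) else 0

set_option linter.unusedSectionVars false

section TauAux

variable {K : Finset (Finset V)} {v : V}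

lemma mem_tupImage {m : ℕ} {a : V} {x : Fin m → V} : a ∈ tupImage x ↔ ∃ i, x i = a := by
  simp [tupImage]

lemma tupImage_comp_equiv {m : ℕ} (x : Fin m → V) (π : Equiv.Perm (Fin m)) :
    tupImage (x ∘ ⇑π) = tupImage x := by
  ext a
  simp only [mem_tupImage, Function.comp_apply]
  exact ⟨fun ⟨i, h⟩ => ⟨π i, h⟩, fun ⟨i, h⟩ => ⟨π.symm i, by simpa using h⟩⟩

lemma isSimplex_comp_equiv {m : ℕ} (K : Finset (Finset V)) (x : Fin m → V)
    (π : Equiv.Perm (Fin m)) : IsSimplex K (x ∘ ⇑π) ↔ IsSimplex K x := by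
  unfold IsSimplex
  rw [tupImage_comp_equiv]
  constructor
  · rintro ⟨h, h2⟩
    refine ⟨?_, h2⟩
    have hx : x = (x ∘ ⇑π) ∘ ⇑π.symm := by ext i; simp
    rw [hx]
    exact h.comp π.symm.injective
  · rintro ⟨h, h2⟩
    exact ⟨h.comp π.injective, h2⟩

lemma tupImage_cons {m : ℕ} (a : V) (x : Fin m → V) :
    tupImage (Fin.cons a x) = insert a (tupImage x) := by
  ext b
  simp [tupImage, Fin.exists_fin_succ, eq_comm]

lemma cons_injective_iff' {m : ℕ} {a : V} {x : Fin m → V} :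
    Function.Injective (Fin.cons a x : Fin (m+1) → V) ↔
      a ∉ tupImage x ∧ Function.Injective x := by
  rw [Fin.cons_injective_iff]
  simp [mem_tupImage, Set.mem_range]

lemma mem_linkK {s : Finset V} :
    s ∈ linkK K v ↔ s ∈ K ∧ v ∉ s ∧ insert v s ∈ K := by
  simp [linkK]

lemma isSimplex_link_iff {m : ℕ} {x : Fin m → V} :
    IsSimplex (linkK K v) x ↔
      Function.Injective x ∧ tupImage x ∈ K ∧ v ∉ tupImage x ∧ insert v (tupImage x) ∈ K := by
  unfold IsSimplex
  rw [mem_linkK]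

lemma isSimplex_cons_vertex {m : ℕ} {x : Fin m → V}
    (hx : IsSimplex (linkK K v) x) : IsSimplex K (Fin.cons v x) := by
  rw [isSimplex_link_iff] at hx
  refine ⟨cons_injective_iff'.mpr ⟨hx.2.2.1, hx.1⟩, ?_⟩
  rw [tupImage_cons]
  exact hx.2.2.2

lemma link_simplex_of_cons (hK : IsComplex K) {m : ℕ}
    {x : Fin (m+1) → V} (hx : IsSimplex K (Fin.cons v x)) : IsSimplex (linkK K v) x := by
  obtain ⟨hinj, hmem⟩ := hx
  rw [tupImage_cons] at hmem
  rw [cons_injective_iff'] at hinj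
  rw [isSimplex_link_iff]
  refine ⟨hinj.2, ?_, hinj.1, hmem⟩
  exact (hK _ hmem).2 _ (Finset.subset_insert _ _) (Finset.univ_nonempty.image x)

lemma wN_link (hK : IsComplex K) {n : ℕ} (hn : 1 ≤ n) {s : Finset V} (hv : v ∉ s) :
    wN (linkK K v) (n-1) s = wN K n (insert v s) := by
  unfold wN
  apply Finset.card_nbij' (i := fun t => insert v t) (j := fun t => t.erase v)
  · intro t ht
    rw [Finset.mem_coe, Finset.mem_filter] at ht ⊢
    obtain ⟨htl, hst, hcard⟩ := ht
    rw [mem_linkK] at htl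
    refine ⟨htl.2.2, Finset.insert_subset_insert _ hst, ?_⟩
    rw [Finset.card_insert_of_notMem htl.2.1]
    omega
  · intro t ht
    rw [Finset.mem_coe, Finset.mem_filter] at ht ⊢
    obtain ⟨htK, hsub, hcard⟩ := ht
    have hvt : v ∈ t := hsub (Finset.mem_insert_self _ _)
    have herase : insert v (t.erase v) = t := Finset.insert_erase hvt
    have hcard' : (t.erase v).card = n := by
      rw [Finset.card_erase_of_mem hvt, hcard]
      omega
    have htK' : t.erase v ∈ K := by
      refine (hK t htK).2 _ (Finset.erase_subset _ _) ?_
      rw [← Finset.card_pos, hcard']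
      omega
    refine ⟨?_, ?_, by beta_reduce; omega⟩
    · rw [mem_linkK]
      exact ⟨htK', Finset.notMem_erase _ _, by rw [herase]; exact htK⟩
    · intro a ha
      exact Finset.mem_erase.mpr ⟨fun h => hv (h ▸ ha), hsub (Finset.mem_insert_of_mem ha)⟩
  · intro t ht
    rw [Finset.mem_coe, Finset.mem_filter, mem_linkK] at ht
    exact Finset.erase_insert ht.1.2.1
  · intro t ht
    rw [Finset.mem_coe, Finset.mem_filter] at ht
    exact Finset.insert_erase (ht.2.1 (Finset.mem_insert_self _ _))

lemma cons_cons_comp_swap {m : ℕ} (u w : V) (x : Fin m → V) :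
    (Fin.cons u (Fin.cons w x) : Fin (m+2) → V) ∘ ⇑(Equiv.swap (0 : Fin (m+2)) 1)
      = Fin.cons w (Fin.cons u x) := by
  funext i
  refine Fin.cases ?_ (fun j => ?_) i
  · simp
  · refine Fin.cases ?_ (fun k => ?_) j
    · have h1 : (Fin.succ 0 : Fin (m+2)) = 1 := rfl
      simp [h1]
    · have h0 : (k.succ.succ : Fin (m+2)) ≠ 0 := Fin.succ_ne_zero _
      have h1 : (k.succ.succ : Fin (m+2)) ≠ 1 := by
        simp [Fin.ext_iff]
      simp [Equiv.swap_apply_of_ne_of_ne h0 h1]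

/-- Fully alternating function on tuples. -/
def TAlt {m : ℕ} (g : (Fin m → V) → ℝ) : Prop :=
  ∀ (x : Fin m → V) (π : Equiv.Perm (Fin m)),
    g (x ∘ ⇑π) = ((Equiv.Perm.sign π : ℤ) : ℝ) * g x

lemma alt_swap {m : ℕ} {g : (Fin m → V) → ℝ} (hg : TAlt g) (x : Fin m → V) {a b : Fin m}
    (hab : a ≠ b) : g (x ∘ ⇑(Equiv.swap a b)) = - g x := by
  rw [hg x (Equiv.swap a b), Equiv.Perm.sign_swap hab]
  norm_num

lemma alt_of_swaps {m : ℕ} {g : (Fin m → V) → ℝ}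
    (hg : ∀ (x : Fin m → V) (a b : Fin m), a ≠ b → g (x ∘ ⇑(Equiv.swap a b)) = - g x) :
    TAlt g := by
  intro x π
  revert x
  refine Equiv.Perm.swap_induction_on π ?_ ?_
  · intro x
    simp
  · intro σ a b hab ih x
    have h1 : x ∘ ⇑(Equiv.swap a b * σ) = (x ∘ ⇑(Equiv.swap a b)) ∘ ⇑σ := by
      funext i
      simp [Equiv.Perm.mul_apply]
    rw [h1, ih, hg x a b hab, Equiv.Perm.sign_mul, Equiv.Perm.sign_swap hab]
    push_cast
    ring

lemma swap_eq_triple {α : Type*} [DecidableEq α] {a b c : α} (hab : a ≠ b) (hac : a ≠ c)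
    (hcb : c ≠ b) (k : α) :
    Equiv.swap a b k = Equiv.swap a c (Equiv.swap c b (Equiv.swap a c k)) := by
  rcases eq_or_ne k a with rfl | hka
  · rw [Equiv.swap_apply_left, Equiv.swap_apply_left, Equiv.swap_apply_left,
      Equiv.swap_apply_of_ne_of_ne hab.symm hcb.symm]
  rcases eq_or_ne k c with rfl | hkc
  · rw [Equiv.swap_apply_of_ne_of_ne hac.symm hcb, Equiv.swap_apply_right,
      Equiv.swap_apply_of_ne_of_ne hac hab,
      Equiv.swap_apply_left]
  rcases eq_or_ne k b with rfl | hkb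
  · rw [Equiv.swap_apply_right, Equiv.swap_apply_of_ne_of_ne hab.symm hcb.symm,
      Equiv.swap_apply_right, Equiv.swap_apply_right]
  · rw [Equiv.swap_apply_of_ne_of_ne hka hkb, Equiv.swap_apply_of_ne_of_ne hka hkc,
      Equiv.swap_apply_of_ne_of_ne hkc hkb, Equiv.swap_apply_of_ne_of_ne hka hkc]

lemma swap_of_adjacent {m : ℕ} {g : (Fin (m+1) → V) → ℝ}
    (hg : ∀ (x : Fin (m+1) → V) (i : Fin m),
      g (x ∘ ⇑(Equiv.swap i.castSucc i.succ)) = - g x) :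
    ∀ (x : Fin (m+1) → V) (a b : Fin (m+1)), a ≠ b → g (x ∘ ⇑(Equiv.swap a b)) = - g x := by
  have main : ∀ (d : ℕ) (x : Fin (m+1) → V) (a b : Fin (m+1)),
      a.val < b.val → b.val - a.val = d + 1 → g (x ∘ ⇑(Equiv.swap a b)) = - g x := by
    intro d
    induction d with
    | zero =>
      intro x a b hlt hd
      have ham : a.val < m := by omega
      have ha : a = (⟨a.val, ham⟩ : Fin m).castSucc := by simp [Fin.ext_iff]
      have hb : b = (⟨a.val, ham⟩ : Fin m).succ := by
        simp only [Fin.ext_iff, Fin.val_succ]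
        omega
      rw [ha, hb]
      exact hg x _
    | succ d ih =>
      intro x a b hlt hd
      have ham : a.val < m := by omega
      obtain ⟨i, rfl⟩ : ∃ i : Fin m, a = i.castSucc :=
        ⟨⟨a.val, ham⟩, by simp [Fin.ext_iff]⟩
      simp only [Fin.coe_castSucc] at hlt hd
      have hac : i.castSucc ≠ i.succ := by
        simp [Fin.ext_iff]
      have hcb : i.succ ≠ b := by
        simp only [ne_eq, Fin.ext_iff, Fin.val_succ]
        omega
      have hab : i.castSucc ≠ b := by
        simp only [ne_eq, Fin.ext_iff, Fin.coe_castSucc]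
        omega
      have hfun : x ∘ ⇑(Equiv.swap i.castSucc b)
          = ((x ∘ ⇑(Equiv.swap i.castSucc i.succ)) ∘ ⇑(Equiv.swap i.succ b))
              ∘ ⇑(Equiv.swap i.castSucc i.succ) := by
        funext k
        exact congrArg x (swap_eq_triple hab hac hcb k)
      rw [hfun, hg, ih _ i.succ b (by simp only [Fin.val_succ]; omega)
        (by simp only [Fin.val_succ]; omega), hg]
      ring
  intro x a b hab
  rcases Nat.lt_or_ge a.val b.val with h | h
  · exact main (b.val - a.val - 1) x a b h (by omega)
  · have hne : a.val ≠ b.val := fun hh => hab (Fin.ext hh)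
    rw [Equiv.swap_comm]
    exact main (a.val - b.val - 1) x b a (by omega) (by omega)
lemma swap_comp_succAbove₁ {m : ℕ} (i : Fin m) :
    ⇑(Equiv.swap i.castSucc i.succ) ∘ (i.castSucc : Fin (m+1)).succAbove
      = (i.succ : Fin (m+1)).succAbove := by
  funext k
  simp only [Function.comp_apply]
  rcases lt_trichotomy (k : ℕ) (i : ℕ) with h | h | h
  · rw [Fin.succAbove_of_castSucc_lt _ _ (by simp only [Fin.lt_def, Fin.coe_castSucc, Fin.val_succ]; omega),
      Fin.succAbove_of_castSucc_lt _ _ (by simp only [Fin.lt_def, Fin.coe_castSucc, Fin.val_succ]; omega),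
      Equiv.swap_apply_of_ne_of_ne (by simp only [ne_eq, Fin.ext_iff, Fin.coe_castSucc, Fin.val_succ]; omega) (by simp only [ne_eq, Fin.ext_iff, Fin.coe_castSucc, Fin.val_succ]; omega)]
  · rw [Fin.succAbove_of_le_castSucc _ _ (by simp only [Fin.le_def, Fin.coe_castSucc, Fin.val_succ]; omega),
      Fin.succAbove_of_castSucc_lt _ _ (by simp only [Fin.lt_def, Fin.coe_castSucc, Fin.val_succ]; omega)]
    have hsk : k.succ = i.succ := by simp only [ne_eq, Fin.ext_iff, Fin.coe_castSucc, Fin.val_succ]; omega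
    rw [hsk, Equiv.swap_apply_right]
    simp [Fin.ext_iff]
    omega
  · rw [Fin.succAbove_of_le_castSucc _ _ (by simp only [Fin.le_def, Fin.coe_castSucc, Fin.val_succ]; omega),
      Fin.succAbove_of_le_castSucc _ _ (by simp only [Fin.le_def, Fin.coe_castSucc, Fin.val_succ]; omega),
      Equiv.swap_apply_of_ne_of_ne (by simp only [ne_eq, Fin.ext_iff, Fin.coe_castSucc, Fin.val_succ]; omega) (by simp only [ne_eq, Fin.ext_iff, Fin.coe_castSucc, Fin.val_succ]; omega)]

lemma swap_comp_succAbove₂ {m : ℕ} (i : Fin m) :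
    ⇑(Equiv.swap i.castSucc i.succ) ∘ (i.succ : Fin (m+1)).succAbove
      = (i.castSucc : Fin (m+1)).succAbove := by
  funext k
  simp only [Function.comp_apply]
  rcases lt_trichotomy (k : ℕ) (i : ℕ) with h | h | h
  · rw [Fin.succAbove_of_castSucc_lt _ _ (by simp only [Fin.lt_def, Fin.coe_castSucc, Fin.val_succ]; omega),
      Fin.succAbove_of_castSucc_lt _ _ (by simp only [Fin.lt_def, Fin.coe_castSucc, Fin.val_succ]; omega),
      Equiv.swap_apply_of_ne_of_ne (by simp only [ne_eq, Fin.ext_iff, Fin.coe_castSucc, Fin.val_succ]; omega) (by simp only [ne_eq, Fin.ext_iff, Fin.coe_castSucc, Fin.val_succ]; omega)]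
  · rw [Fin.succAbove_of_castSucc_lt _ _ (by simp only [Fin.lt_def, Fin.coe_castSucc, Fin.val_succ]; omega),
      Fin.succAbove_of_le_castSucc _ _ (by simp only [Fin.le_def, Fin.coe_castSucc, Fin.val_succ]; omega)]
    have hsk : k.castSucc = i.castSucc := by simp only [ne_eq, Fin.ext_iff, Fin.coe_castSucc, Fin.val_succ]; omega
    rw [hsk, Equiv.swap_apply_left]
    simp [Fin.ext_iff]
    omega
  · rw [Fin.succAbove_of_le_castSucc _ _ (by simp only [Fin.le_def, Fin.coe_castSucc, Fin.val_succ]; omega),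
      Fin.succAbove_of_le_castSucc _ _ (by simp only [Fin.le_def, Fin.coe_castSucc, Fin.val_succ]; omega),
      Equiv.swap_apply_of_ne_of_ne (by simp only [ne_eq, Fin.ext_iff, Fin.coe_castSucc, Fin.val_succ]; omega) (by simp only [ne_eq, Fin.ext_iff, Fin.coe_castSucc, Fin.val_succ]; omega)]

lemma dOp_adj_swap {m : ℕ} {g : (Fin m → V) → ℝ} (hg : TAlt g) (x : Fin (m+1) → V)
    (i : Fin m) :
    dOp g (x ∘ ⇑(Equiv.swap i.castSucc i.succ)) = - dOp g x := by
  have hcs : ((i.castSucc : Fin (m+1)) : ℕ) = (i : ℕ) := rfl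
  have hss : ((i.succ : Fin (m+1)) : ℕ) = (i : ℕ) + 1 := rfl
  have key : ∀ j : Fin (m+1),
      (-1 : ℝ)^(j : ℕ) * g ((x ∘ ⇑(Equiv.swap i.castSucc i.succ)) ∘ j.succAbove)
      = -((-1 : ℝ)^(((Equiv.swap i.castSucc i.succ) j : Fin (m+1)) : ℕ)
          * g (x ∘ ((Equiv.swap i.castSucc i.succ) j).succAbove)) := by
    intro j
    rcases eq_or_ne j i.castSucc with rfl | hj1
    · rw [Equiv.swap_apply_left]
      have hc : (x ∘ ⇑(Equiv.swap i.castSucc i.succ)) ∘ (i.castSucc : Fin (m+1)).succAbove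
          = x ∘ (i.succ : Fin (m+1)).succAbove := by
        rw [Function.comp_assoc, swap_comp_succAbove₁]
      rw [hc, hcs, hss, pow_succ]
      ring
    rcases eq_or_ne j i.succ with rfl | hj2
    · rw [Equiv.swap_apply_right]
      have hc : (x ∘ ⇑(Equiv.swap i.castSucc i.succ)) ∘ (i.succ : Fin (m+1)).succAbove
          = x ∘ (i.castSucc : Fin (m+1)).succAbove := by
        rw [Function.comp_assoc, swap_comp_succAbove₂]
      rw [hc, hcs, hss, pow_succ]
      ring
    · rw [Equiv.swap_apply_of_ne_of_ne hj1 hj2]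
      obtain ⟨a', ha'⟩ := Fin.exists_succAbove_eq (Ne.symm hj1)
      obtain ⟨b', hb'⟩ := Fin.exists_succAbove_eq (Ne.symm hj2)
      have hab : a' ≠ b' := by
        rintro rfl
        rw [ha'] at hb'
        exact absurd hb' (by simp only [ne_eq, Fin.ext_iff, Fin.coe_castSucc, Fin.val_succ]; omega)
      have hc : (x ∘ ⇑(Equiv.swap i.castSucc i.succ)) ∘ j.succAbove
          = (x ∘ j.succAbove) ∘ ⇑(Equiv.swap a' b') := by
        rw [Function.comp_assoc, ← ha', ← hb',
          (Fin.succAbove_right_injective (p := j)).swap_comp, ← Function.comp_assoc]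
      rw [hc, alt_swap hg _ hab]
      ring
  unfold dOp
  calc ∑ j : Fin (m+1), (-1 : ℝ)^(j : ℕ)
        * g ((x ∘ ⇑(Equiv.swap i.castSucc i.succ)) ∘ j.succAbove)
      = ∑ j : Fin (m+1), -((-1 : ℝ)^(((Equiv.swap i.castSucc i.succ) j : Fin (m+1)) : ℕ)
          * g (x ∘ ((Equiv.swap i.castSucc i.succ) j).succAbove)) :=
        Finset.sum_congr rfl (fun j _ => key j)
    _ = -∑ j : Fin (m+1), (-1 : ℝ)^(((Equiv.swap i.castSucc i.succ) j : Fin (m+1)) : ℕ)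
          * g (x ∘ ((Equiv.swap i.castSucc i.succ) j).succAbove) := by
        rw [Finset.sum_neg_distrib]
    _ = -∑ j : Fin (m+1), (-1 : ℝ)^(j : ℕ) * g (x ∘ j.succAbove) := by
        rw [Equiv.sum_comp (Equiv.swap i.castSucc i.succ)
          (fun j => (-1 : ℝ)^(j : ℕ) * g (x ∘ j.succAbove))]

lemma dOp_alt {m : ℕ} {g : (Fin m → V) → ℝ} (hg : TAlt g) : TAlt (dOp g) :=
  alt_of_swaps (swap_of_adjacent (fun x i => dOp_adj_swap hg x i))

lemma rhoOp_alt {m : ℕ} {v : V} {f : (Fin m → V) → ℝ} (hf : TAlt f) : TAlt (rhoOp v f) := by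
  intro x π
  unfold rhoOp
  rw [tupImage_comp_equiv]
  split_ifs with h
  · exact hf x π
  · ring

lemma deltaOp_alt {m : ℕ} (K : Finset (Finset V)) (w : Finset V → ℝ)
    {G : (Fin (m+1) → V) → ℝ} (hG : TAlt G) : TAlt (deltaOp K w G) := by
  intro x π
  unfold deltaOp
  rw [Finset.mul_sum]
  apply Finset.sum_congr rfl
  intro u _
  have hcons : Fin.cons u (x ∘ ⇑π) = (Fin.cons u x : Fin (m+1) → V)
      ∘ ⇑(Equiv.Perm.decomposeFin.symm (0, π)) := by
    funext k
    refine Fin.cases ?_ (fun l => ?_) k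
    · simp
    · simp [Equiv.Perm.decomposeFin_symm_apply_succ, Fin.zero_succAbove]
  have hsign : ((Equiv.Perm.sign (Equiv.Perm.decomposeFin.symm (0, π)) : ℤ) : ℝ)
      = ((Equiv.Perm.sign π : ℤ) : ℝ) := by
    rw [Equiv.Perm.decomposeFin.symm_sign]
    simp
  rw [hcons, tupImage_comp_equiv, isSimplex_comp_equiv, hG (Fin.cons u x), hsign]
  split_ifs with h
  · ring
  · ring
lemma tauOp_apply {m : ℕ} (K : Finset (Finset V)) (v : V) (F : (Fin (m+1) → V) → ℝ)
    (x : Fin m → V) :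
    tauOp K v F x = if IsSimplex K (Fin.cons v x) then F (Fin.cons v x) else 0 := rfl

lemma dOp_apply {m : ℕ} (g : (Fin m → V) → ℝ) (x : Fin (m+1) → V) :
    dOp g x = ∑ j : Fin (m+1), (-1 : ℝ)^(j : ℕ) * g (x ∘ j.succAbove) := rfl

lemma deltaOp_apply {m : ℕ} (K : Finset (Finset V)) (w : Finset V → ℝ)
    (F : (Fin (m+1) → V) → ℝ) (x : Fin m → V) :
    deltaOp K w F x = ∑ u : V, if IsSimplex K (Fin.cons u x) then
      (w (insert u (tupImage x)) / w (tupImage x)) * F (Fin.cons u x) else 0 := rfl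

lemma rhoOp_apply {m : ℕ} (v : V) (f : (Fin m → V) → ℝ) (x : Fin m → V) :
    rhoOp v f x = if v ∈ tupImage x then f x else 0 := rfl

lemma lem_one (K : Finset (Finset V)) (v : V) {j : ℕ} (f : (Fin (j + 2) → V) → ℝ)
    (hf : IsCochain K f) (x : Fin (j + 2) → V) (hx : IsSimplex (linkK K v) x) :
    tauOp K v (dOp (rhoOp v f)) x = - dOp (tauOp K v f) x := by
  have hxs : IsSimplex K (Fin.cons v x) := isSimplex_cons_vertex hx
  rw [tauOp_apply, if_pos hxs, dOp_apply, dOp_apply, Fin.sum_univ_succ]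
  have h0 : (Fin.cons v x : Fin (j+3) → V) ∘ (0 : Fin (j+3)).succAbove = x := by
    funext k
    simp [Fin.zero_succAbove]
  have hρ0 : rhoOp v f x = 0 := by
    rw [rhoOp_apply, if_neg]
    rw [isSimplex_link_iff] at hx
    exact hx.2.2.1
  rw [h0, hρ0, mul_zero, zero_add, ← Finset.sum_neg_distrib]
  apply Finset.sum_congr rfl
  intro i _
  have hsucc : (Fin.cons v x : Fin (j+3) → V) ∘ (i.succ : Fin (j+3)).succAbove
      = Fin.cons v (x ∘ i.succAbove) := by
    funext k
    refine Fin.cases ?_ (fun l => ?_) k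
    · simp
    · simp [Fin.succ_succAbove_succ]
  rw [hsucc, tauOp_apply, rhoOp_apply,
    if_pos (show v ∈ tupImage (Fin.cons v (x ∘ i.succAbove)) by
      rw [tupImage_cons]; exact Finset.mem_insert_self _ _)]
  by_cases hP : IsSimplex K (Fin.cons v (x ∘ Fin.succAbove i))
  · rw [if_pos hP, Fin.val_succ, pow_succ]
    ring
  · rw [if_neg hP, hf.1 _ hP]
    ring

lemma lem_two_gen (K : Finset (Finset V)) (hK : IsComplex K) {n : ℕ} (hn : 1 ≤ n) (v : V)
    {m : ℕ} (x : Fin (m + 1) → V) (hx : IsSimplex (linkK K v) x)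
    (F : (Fin (m + 3) → V) → ℝ)
    (hswap : ∀ u : V, F (Fin.cons u (Fin.cons v x)) = - F (Fin.cons v (Fin.cons u x))) :
    tauOp K v (deltaOp K (wR K n) F) x
      = - deltaOp (linkK K v) (wR (linkK K v) (n - 1)) (tauOp K v F) x := by
  have hxK : IsSimplex K (Fin.cons v x) := isSimplex_cons_vertex hx
  have hvx : v ∉ tupImage x := by
    rw [isSimplex_link_iff] at hx
    exact hx.2.2.1
  rw [tauOp_apply, if_pos hxK, deltaOp_apply, deltaOp_apply, ← Finset.sum_neg_distrib]
  apply Finset.sum_congr rfl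
  intro u _
  rw [tauOp_apply]
  by_cases h : IsSimplex K (Fin.cons u (Fin.cons v x))
  · -- extract facts from h
    obtain ⟨hinj, hmem⟩ := h
    have hinj' := hinj
    rw [cons_injective_iff', tupImage_cons] at hinj'
    obtain ⟨hu, hinjvx⟩ := hinj'
    rw [tupImage_cons, tupImage_cons] at hmem
    have huv : u ≠ v := fun e => hu (by rw [e]; exact Finset.mem_insert_self v _)
    have hux : u ∉ tupImage x := fun e => hu (Finset.mem_insert_of_mem e)
    have hvux : v ∉ insert u (tupImage x) := by
      intro hvm
      rcases Finset.mem_insert.mp hvm with e | hv2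
      · exact huv e.symm
      · exact hvx hv2
    have hlink : IsSimplex (linkK K v) (Fin.cons u x) := by
      rw [isSimplex_link_iff, tupImage_cons]
      have hxinj : Function.Injective x := (cons_injective_iff'.mp hinjvx).2
      refine ⟨cons_injective_iff'.mpr ⟨hux, hxinj⟩, ?_, hvux, ?_⟩
      · refine (hK _ hmem).2 _ ?_ (Finset.insert_nonempty _ _)
        intro a ha
        rcases Finset.mem_insert.mp ha with rfl | ha2
        · exact Finset.mem_insert_self _ _
        · exact Finset.mem_insert_of_mem (Finset.mem_insert_of_mem ha2)
      · rw [Finset.insert_comm]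
        exact hmem
    have hKvu : IsSimplex K (Fin.cons v (Fin.cons u x)) := by
      rw [← isSimplex_comp_equiv K _ (Equiv.swap 0 1), cons_cons_comp_swap v u x]
      exact ⟨hinj, by rw [tupImage_cons, tupImage_cons]; exact hmem⟩
    have w1 : wR K n (insert u (tupImage (Fin.cons v x)))
        = wR (linkK K v) (n-1) (insert u (tupImage x)) := by
      rw [tupImage_cons, Finset.insert_comm]
      unfold wR
      rw [← wN_link hK hn hvux]
    have w2 : wR K n (tupImage (Fin.cons v x)) = wR (linkK K v) (n-1) (tupImage x) := by
      rw [tupImage_cons]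
      unfold wR
      rw [← wN_link hK hn hvx]
    rw [if_pos ⟨hinj, by rw [tupImage_cons, tupImage_cons]; exact hmem⟩,
      if_pos hlink, if_pos hKvu, w1, w2, hswap u]
    ring
  · have hnl : ¬ IsSimplex (linkK K v) (Fin.cons u x) := by
      intro hl
      apply h
      rw [← isSimplex_comp_equiv K _ (Equiv.swap 0 1), cons_cons_comp_swap u v x]
      exact isSimplex_cons_vertex hl
    rw [if_neg h, if_neg hnl]
    ring

lemma lem_two (K : Finset (Finset V)) (hK : IsComplex K) {n : ℕ} (hn : 1 ≤ n) (v : V)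
    {j : ℕ} (f : (Fin (j + 3) → V) → ℝ) (hf : IsCochain K f)
    (x : Fin (j + 1) → V) (hx : IsSimplex (linkK K v) x) :
    tauOp K v (deltaOp K (wR K n) f) x
      = - deltaOp (linkK K v) (wR (linkK K v) (n - 1)) (tauOp K v f) x := by
  refine lem_two_gen K hK hn v x hx f (fun u => ?_)
  have h01 : (0 : Fin (j + 3)) ≠ 1 := by
    simp only [ne_eq, Fin.ext_iff, Fin.val_zero, Fin.val_one]
    omega
  rw [← cons_cons_comp_swap v u x, hf.2 _ (Equiv.swap 0 1), Equiv.Perm.sign_swap h01]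
  norm_num
lemma lem_three (K : Finset (Finset V)) (hK : IsComplex K) {n : ℕ} (hn : 1 ≤ n) (v : V)
    {j : ℕ} (f : (Fin (j + 2) → V) → ℝ) (hf : IsCochain K f)
    (x : Fin (j + 1) → V) (hx : IsSimplex (linkK K v) x) :
    tauOp K v (deltaOp K (wR K n) (dOp (rhoOp v f))) x
      = deltaOp (linkK K v) (wR (linkK K v) (n - 1)) (dOp (tauOp K v f)) x := by
  have hAlt : TAlt (dOp (rhoOp v f)) := dOp_alt (rhoOp_alt hf.2)
  have h01 : (0 : Fin (j + 3)) ≠ 1 := by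
    simp only [ne_eq, Fin.ext_iff, Fin.val_zero, Fin.val_one]
    omega
  have hswap : ∀ u : V, dOp (rhoOp v f) (Fin.cons u (Fin.cons v x))
      = - dOp (rhoOp v f) (Fin.cons v (Fin.cons u x)) := by
    intro u
    rw [← cons_cons_comp_swap v u x]
    exact alt_swap hAlt _ h01
  rw [lem_two_gen K hK hn v x hx _ hswap, deltaOp_apply, deltaOp_apply,
    ← Finset.sum_neg_distrib]
  apply Finset.sum_congr rfl
  intro u _
  by_cases hl : IsSimplex (linkK K v) (Fin.cons u x)
  · rw [if_pos hl, if_pos hl, lem_one K v f hf _ hl]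
    ring
  · rw [if_neg hl, if_neg hl]
    ring

lemma insertNth_eq_cons_comp {m : ℕ} (k : Fin (m+1)) (v : V) (y : Fin m → V) :
    Fin.insertNth k v y = Fin.cons v y ∘ ⇑(Fin.cycleRange k) := by
  funext i
  rcases eq_or_ne i k with rfl | hik
  · rw [Fin.insertNth_apply_same, Function.comp_apply, Fin.cycleRange_self, Fin.cons_zero]
  · obtain ⟨l, rfl⟩ := Fin.exists_succAbove_eq hik
    rw [Fin.insertNth_apply_succAbove, Function.comp_apply, Fin.cycleRange_succAbove,
      Fin.cons_succ]
lemma lem_four (K : Finset (Finset V)) (hK : IsComplex K) {n : ℕ} (hn : 1 ≤ n) (v : V)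
    {j : ℕ} (f : (Fin (j + 2) → V) → ℝ) (hf : IsCochain K f) :
    oinner (wR K n) (deltaOp K (wR K n) (dOp (rhoOp v f))) (rhoOp v f)
      = oinner (wR (linkK K v) (n - 1))
          (deltaOp (linkK K v) (wR (linkK K v) (n - 1)) (dOp (tauOp K v f)))
          (tauOp K v f) := by
  classical
  set D := deltaOp K (wR K n) (dOp (rhoOp v f)) with hD
  have hDAlt : TAlt D := deltaOp_alt K _ (dOp_alt (rhoOp_alt hf.2))
  have hgAlt : TAlt (rhoOp v f) := rhoOp_alt hf.2
  set S : ℝ := ∑ y ∈ Finset.univ.filter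
      (fun y : Fin (j+1) → V => IsSimplex K (Fin.cons v y)),
      wR K n (insert v (tupImage y)) * D (Fin.cons v y) * f (Fin.cons v y) with hS
  let idx : (Fin (j+2) → V) → Fin (j+2) := fun x =>
    if h : ∃ k, x k = v then h.choose else 0
  have hidx : ∀ x : Fin (j+2) → V, v ∈ tupImage x → x (idx x) = v := by
    intro x hv2
    rw [mem_tupImage] at hv2
    simp only [idx, dif_pos hv2]
    exact hv2.choose_spec
  unfold oinner
  have hnum : ∑ x : Fin (j+2) → V, wR K n (tupImage x) * D x * rhoOp v f x
      = (j+2 : ℝ) * S := by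
    have hstep1 : ∑ x : Fin (j+2) → V, wR K n (tupImage x) * D x * rhoOp v f x
        = ∑ x ∈ Finset.univ.filter
            (fun x : Fin (j+2) → V => IsSimplex K x ∧ v ∈ tupImage x),
            wR K n (tupImage x) * D x * rhoOp v f x := by
      symm
      apply Finset.sum_filter_of_ne
      intro x _ hne
      by_contra hP
      apply hne
      have hrho : rhoOp v f x = 0 := by
        rw [rhoOp_apply]
        by_cases hv2 : v ∈ tupImage x
        · rw [if_pos hv2]
          exact hf.1 x (fun hs => hP ⟨hs, hv2⟩)
        · rw [if_neg hv2]
      rw [hrho, mul_zero]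
    have hstep2 : ∑ x ∈ Finset.univ.filter
          (fun x : Fin (j+2) → V => IsSimplex K x ∧ v ∈ tupImage x),
          wR K n (tupImage x) * D x * rhoOp v f x
        = ∑ p ∈ Finset.univ.filter
            (fun p : Fin (j+2) × (Fin (j+1) → V) => IsSimplex K (Fin.cons v p.2)),
            wR K n (tupImage (Fin.insertNth p.1 v p.2)) * D (Fin.insertNth p.1 v p.2)
              * rhoOp v f (Fin.insertNth p.1 v p.2) := by
      symm
      apply Finset.sum_nbij'
        (i := fun p : Fin (j+2) × (Fin (j+1) → V) => Fin.insertNth p.1 v p.2)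
        (j := fun x : Fin (j+2) → V => (idx x, Fin.removeNth (idx x) x))
      · intro p hp
        rw [Finset.mem_filter] at hp ⊢
        refine ⟨Finset.mem_univ _, ?_, ?_⟩
        · rw [insertNth_eq_cons_comp, isSimplex_comp_equiv]
          exact hp.2
        · rw [insertNth_eq_cons_comp, tupImage_comp_equiv, tupImage_cons]
          exact Finset.mem_insert_self _ _
      · intro x hx2
        rw [Finset.mem_filter] at hx2 ⊢
        obtain ⟨-, hxs, hvx⟩ := hx2
        refine ⟨Finset.mem_univ _, ?_⟩
        have hxi : x (idx x) = v := hidx x hvx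
        have hins : Fin.insertNth (idx x) v (Fin.removeNth (idx x) x) = x := by
          conv_lhs => rw [← hxi]
          exact Fin.insertNth_self_removeNth _ _
        rw [← isSimplex_comp_equiv K _ (Fin.cycleRange (idx x)), ← insertNth_eq_cons_comp, hins]
        exact hxs
      · intro p hp
        rw [Finset.mem_filter] at hp
        have hinj : Function.Injective (Fin.insertNth p.1 v p.2) := by
          rw [insertNth_eq_cons_comp]
          exact (hp.2.1).comp (Fin.cycleRange p.1).injective
        have hvp : (Fin.insertNth p.1 v p.2 : Fin (j+2) → V) p.1 = v := by simp
        have hidx2 : idx (Fin.insertNth p.1 v p.2) = p.1 := by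
          apply hinj
          rw [hvp]
          exact hidx _ (by rw [mem_tupImage]; exact ⟨p.1, hvp⟩)
        rw [hidx2, Fin.removeNth_insertNth]
      · intro x hx2
        rw [Finset.mem_filter] at hx2
        have hxi : x (idx x) = v := hidx x hx2.2.2
        conv_lhs => rw [← hxi]
        exact Fin.insertNth_self_removeNth _ _
      · intro p _
        rfl
    have hstep3 : ∀ p : Fin (j+2) × (Fin (j+1) → V),
        wR K n (tupImage (Fin.insertNth p.1 v p.2)) * D (Fin.insertNth p.1 v p.2)
          * rhoOp v f (Fin.insertNth p.1 v p.2)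
        = wR K n (insert v (tupImage p.2)) * D (Fin.cons v p.2) * f (Fin.cons v p.2) := by
      intro p
      have hsgn : ((Equiv.Perm.sign (Fin.cycleRange p.1) : ℤ) : ℝ) = (-1 : ℝ)^((p.1 : Fin (j+2)) : ℕ) := by
        rw [Fin.sign_cycleRange]
        push_cast
        ring
      have hrho : rhoOp v f (Fin.cons v p.2) = f (Fin.cons v p.2) := by
        rw [rhoOp_apply, if_pos (by rw [tupImage_cons]; exact Finset.mem_insert_self _ _)]
      rw [insertNth_eq_cons_comp, tupImage_comp_equiv, tupImage_cons,
        hDAlt (Fin.cons v p.2) (Fin.cycleRange p.1), hgAlt (Fin.cons v p.2) (Fin.cycleRange p.1),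
        hsgn, hrho]
      have hs2 : (-1 : ℝ)^((p.1 : Fin (j+2)) : ℕ) * (-1 : ℝ)^((p.1 : Fin (j+2)) : ℕ) = 1 := by
        rw [← pow_add, ← two_mul, pow_mul]
        norm_num
      calc wR K n (insert v (tupImage p.2)) * ((-1:ℝ)^((p.1 : Fin (j+2)) : ℕ) * D (Fin.cons v p.2))
            * ((-1:ℝ)^((p.1 : Fin (j+2)) : ℕ) * f (Fin.cons v p.2))
          = ((-1:ℝ)^((p.1 : Fin (j+2)) : ℕ) * (-1:ℝ)^((p.1 : Fin (j+2)) : ℕ))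
            * (wR K n (insert v (tupImage p.2)) * D (Fin.cons v p.2) * f (Fin.cons v p.2)) := by
            ring
        _ = wR K n (insert v (tupImage p.2)) * D (Fin.cons v p.2) * f (Fin.cons v p.2) := by
            rw [hs2, one_mul]
    have hstep4 : ∑ p ∈ Finset.univ.filter
          (fun p : Fin (j+2) × (Fin (j+1) → V) => IsSimplex K (Fin.cons v p.2)),
          wR K n (insert v (tupImage p.2)) * D (Fin.cons v p.2) * f (Fin.cons v p.2)
        = (j+2 : ℝ) * S := by
      rw [Finset.sum_filter, Fintype.sum_prod_type]
      have hinner : ∀ k : Fin (j+2),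
          (∑ y : Fin (j+1) → V, if IsSimplex K (Fin.cons v y) then
            wR K n (insert v (tupImage y)) * D (Fin.cons v y) * f (Fin.cons v y) else 0) = S := by
        intro k
        rw [hS, Finset.sum_filter]
      rw [Finset.sum_congr rfl (fun k _ => hinner k), Finset.sum_const, Finset.card_univ,
        Fintype.card_fin, nsmul_eq_mul]
      push_cast
      ring
    rw [hstep1, hstep2, Finset.sum_congr rfl (fun p _ => hstep3 p), hstep4]
  have hnum2 : ∑ y : Fin (j+1) → V, wR (linkK K v) (n-1) (tupImage y)
      * deltaOp (linkK K v) (wR (linkK K v) (n-1)) (dOp (tauOp K v f)) y * tauOp K v f y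
      = S := by
    have hres : ∑ y : Fin (j+1) → V, wR (linkK K v) (n-1) (tupImage y)
        * deltaOp (linkK K v) (wR (linkK K v) (n-1)) (dOp (tauOp K v f)) y * tauOp K v f y
        = ∑ y ∈ Finset.univ.filter (fun y : Fin (j+1) → V => IsSimplex K (Fin.cons v y)),
            wR (linkK K v) (n-1) (tupImage y)
              * deltaOp (linkK K v) (wR (linkK K v) (n-1)) (dOp (tauOp K v f)) y
              * tauOp K v f y := by
      symm
      apply Finset.sum_filter_of_ne
      intro y _ hne
      by_contra hP
      apply hne
      have htau : tauOp K v f y = 0 := by rw [tauOp_apply, if_neg hP]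
      rw [htau, mul_zero]
    rw [hres, hS]
    apply Finset.sum_congr rfl
    intro y hy
    rw [Finset.mem_filter] at hy
    have hyl : IsSimplex (linkK K v) y := link_simplex_of_cons hK hy.2
    have hvy : v ∉ tupImage y := by
      rw [isSimplex_link_iff] at hyl
      exact hyl.2.2.1
    have hw : wR (linkK K v) (n-1) (tupImage y) = wR K n (insert v (tupImage y)) := by
      unfold wR
      rw [wN_link hK hn hvy]
    have hdelta : deltaOp (linkK K v) (wR (linkK K v) (n-1)) (dOp (tauOp K v f)) y
        = D (Fin.cons v y) := by
      rw [← lem_three K hK hn v f hf y hyl, tauOp_apply, if_pos hy.2, hD]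
    have htau : tauOp K v f y = f (Fin.cons v y) := by
      rw [tauOp_apply, if_pos hy.2]
    rw [hw, hdelta, htau]
  rw [hnum, hnum2, show ((j+2).factorial : ℝ) = (j+2 : ℝ) * ((j+1).factorial : ℝ) by
      rw [show j+2 = (j+1)+1 from rfl, Nat.factorial_succ]
      push_cast
      ring,
    mul_div_mul_left _ _ (by positivity : (j+2:ℝ) ≠ 0)]

end TauAux

/-- local commutation identities for `τ_v` — on the link of `v`,
`τ_v d ρ_v f = −d_v τ_v f`, `τ_v δ f = −δ_v τ_v f`, `τ_v Δ ρ_v f = Δ_v τ_v f`,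
and consequently `(Δ ρ_v f, ρ_v f) = (Δ_v τ_v f, τ_v f)_v`. -/
theorem tau_commutation_identities (K : Finset (Finset V)) (hK : IsComplex K)
    (n : ℕ) (hn : 1 ≤ n) (hdim : DimLE K n) (hstar : StarProp K n)
    (v : V) (hv : {v} ∈ K) :
    (∀ (j : ℕ) (f : (Fin (j + 2) → V) → ℝ), IsCochain K f →
      ∀ x : Fin (j + 2) → V, IsSimplex (linkK K v) x →
        tauOp K v (dOp (rhoOp v f)) x = - dOp (tauOp K v f) x) ∧
    (∀ (j : ℕ) (f : (Fin (j + 3) → V) → ℝ), IsCochain K f →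
      ∀ x : Fin (j + 1) → V, IsSimplex (linkK K v) x →
        tauOp K v (deltaOp K (wR K n) f) x
          = - deltaOp (linkK K v) (wR (linkK K v) (n - 1)) (tauOp K v f) x) ∧
    (∀ (j : ℕ) (f : (Fin (j + 2) → V) → ℝ), IsCochain K f →
      ∀ x : Fin (j + 1) → V, IsSimplex (linkK K v) x →
        tauOp K v (deltaOp K (wR K n) (dOp (rhoOp v f))) x
          = deltaOp (linkK K v) (wR (linkK K v) (n - 1)) (dOp (tauOp K v f)) x) ∧
    (∀ (j : ℕ) (f : (Fin (j + 2) → V) → ℝ), IsCochain K f →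
      oinner (wR K n) (deltaOp K (wR K n) (dOp (rhoOp v f))) (rhoOp v f)
        = oinner (wR (linkK K v) (n - 1))
            (deltaOp (linkK K v) (wR (linkK K v) (n - 1)) (dOp (tauOp K v f)))
            (tauOp K v f)) := by
  refine ⟨?_, ?_, ?_, ?_⟩
  · intro j f hf x hx
    exact lem_one K v f hf x hx
  · intro j f hf x hx
    exact lem_two K hK hn v f hf x hx
  · intro j f hf x hx
    exact lem_three K hK hn v f hf x hx
  · intro j f hf
    exact lem_four K hK hn v f hf

end
end

section
/- Let X_F be a flag complex of dimension N ≥ 1 over F_q. If a Δ-eigenfunction f ∈ C^0(X_F) is type-constant (constant on vertices of each type) and the sum of its type values is zero, then Δf = (N+1)f. Conversely, every Δ-eigenfunction with eigenvalue 0 is constant and every Δ-eigenfunction with eigenvalue N+1 is type-constant with type values summing to zero; hence the maximal eigenvalue N+1 of Δ on C^0(X_F) has multiplicity exactly N. -/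
open scoped Classical

noncomputable section

variable {F : Type*} [Field F] [Fintype F] {V : Type*} [AddCommGroup V] [Module F V]

/-- A flag in `V`: a chain of nonzero proper subspaces. -/
def IsFlag (C : Finset (Submodule F V)) : Prop :=
  IsChain (· ≤ ·) (C : Set (Submodule F V)) ∧ ∀ W ∈ C, W ≠ ⊥ ∧ W ≠ ⊤

/-- The number of complete flags (chains of `n+1` nonzero proper subspaces of the
`(n+2)`-dimensional space `V`, i.e. top-dimensional simplices of a flag complex)
containing a given flag `s`. -/
def flagCount (F : Type*) [Field F] {V : Type*} [AddCommGroup V] [Module F V]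
    (n : ℕ) (s : Finset (Submodule F V)) : ℕ :=
  Nat.card {C : Finset (Submodule F V) // IsFlag C ∧ C.card = n + 1 ∧ s ⊆ C}


/-- `W` is a vertex of the flag complex `X_F`, i.e. `F ∪ {W}` is a flag properly
refining `F`. -/
def VertF (Fl : Finset (Submodule F V)) (W : Submodule F V) : Prop :=
  W ∉ Fl ∧ IsFlag (insert W Fl)

/-- The laplacian `Δ = δd` on `C^0(X_F)`:
`Δf(v) = ∑_{x ∼ v} (w([v,x])/w(v)) (f(v) − f(x))`. -/
def lapF (F : Type*) [Field F] {V : Type*} [AddCommGroup V] [Module F V]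
    [Fintype (Submodule F V)] (n : ℕ) (Fl : Finset (Submodule F V))
    (f : Submodule F V → ℝ) (W : Submodule F V) : ℝ :=
  (∑ U : Submodule F V,
      if U ≠ W ∧ VertF Fl U ∧ IsFlag (insert U (insert W Fl)) then
        (flagCount F n (insert U (insert W Fl)) : ℝ) * (f W - f U)
      else 0) / (flagCount F n (insert W Fl) : ℝ)

/-! ### Auxiliary material -/

set_option linter.unusedSectionVars false

open Module Finset

lemma IsFlag.subset {C s : Finset (Submodule F V)} (hC : IsFlag C) (hs : s ⊆ C) : IsFlag s :=
  ⟨hC.1.mono (by exact_mod_cast hs), fun W hW => hC.2 W (hs hW)⟩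

lemma IsFlag.lt_or_lt {C : Finset (Submodule F V)} (hC : IsFlag C) {A B : Submodule F V}
    (hA : A ∈ C) (hB : B ∈ C) (hne : A ≠ B) : A < B ∨ B < A := by
  rcases hC.1 (by exact_mod_cast hA) (by exact_mod_cast hB) hne with h | h
  · exact Or.inl (lt_of_le_of_ne h hne)
  · exact Or.inr (lt_of_le_of_ne h hne.symm)

/-- The member of `C` of dimension `α` (junk value `⊥` if none). -/
def memd (α : ℕ) (C : Finset (Submodule F V)) : Submodule F V :=
  if h : ∃ Y ∈ C, finrank F ↥Y = α then h.choose else ⊥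

lemma memd_mem {α : ℕ} {C : Finset (Submodule F V)} (h : ∃ Y ∈ C, finrank F ↥Y = α) :
    memd α C ∈ C ∧ finrank F ↥(memd α C) = α := by
  rw [memd, dif_pos h]
  exact ⟨h.choose_spec.1, h.choose_spec.2⟩

/-- The set of types of the link of `Fl` (dimensions not occupied by `Fl`). -/
def Tset (n : ℕ) (Fl : Finset (Submodule F V)) : Finset ℕ :=
  (Finset.Icc 1 (n + 1)).filter (fun α => ∀ U ∈ Fl, finrank F ↥U ≠ α)

lemma mem_Tset {n α : ℕ} {Fl : Finset (Submodule F V)} :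
    α ∈ Tset n Fl ↔ α ∈ Icc 1 (n+1) ∧ ∀ U ∈ Fl, finrank F ↥U ≠ α := by
  simp [Tset]

lemma Tset_subset_Icc {n : ℕ} {Fl : Finset (Submodule F V)} : Tset n Fl ⊆ Icc 1 (n+1) :=
  Finset.filter_subset _ _

lemma chain_sup_mem : ∀ (s : Finset (Submodule F V)), s.Nonempty →
    IsChain (· ≤ ·) (s : Set (Submodule F V)) → s.sup id ∈ s := by
  intro s
  induction s using Finset.cons_induction with
  | empty => intro h; exact absurd h (by simp)
  | cons a t ha ih =>
    intro _ hchain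
    rw [Finset.sup_cons]
    rcases t.eq_empty_or_nonempty with rfl | ht
    · simp
    · have htc : IsChain (· ≤ ·) (t : Set (Submodule F V)) :=
        hchain.mono (by intro x hx; simp at hx ⊢; exact Or.inr hx)
      have hmem := ih ht htc
      have hat : a ≠ t.sup id := fun h => ha (h ▸ hmem)
      rcases hchain (by simp) (by simp [hmem]) hat with h | h
      · show id a ⊔ t.sup id ∈ _
        rw [id, sup_eq_right.mpr h]; simp [hmem]
      · show id a ⊔ t.sup id ∈ _
        rw [id, sup_eq_left.mpr h]; simp

lemma chain_inf_mem : ∀ (s : Finset (Submodule F V)), s.Nonempty →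
    IsChain (· ≤ ·) (s : Set (Submodule F V)) → s.inf id ∈ s := by
  intro s
  induction s using Finset.cons_induction with
  | empty => intro h; exact absurd h (by simp)
  | cons a t ha ih =>
    intro _ hchain
    rw [Finset.inf_cons]
    rcases t.eq_empty_or_nonempty with rfl | ht
    · simp
    · have htc : IsChain (· ≤ ·) (t : Set (Submodule F V)) :=
        hchain.mono (by intro x hx; simp at hx ⊢; exact Or.inr hx)
      have hmem := ih ht htc
      have hat : a ≠ t.inf id := fun h => ha (h ▸ hmem)
      rcases hchain (by simp) (by simp [hmem]) hat with h | h
      · show id a ⊓ t.inf id ∈ _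
        rw [id, inf_eq_left.mpr h]; simp
      · show id a ⊓ t.inf id ∈ _
        rw [id, inf_eq_right.mpr h]; simp [hmem]

section FD
variable [FiniteDimensional F V]

lemma IsFlag.rk_injOn {C : Finset (Submodule F V)} (hC : IsFlag C) {A B : Submodule F V}
    (hA : A ∈ C) (hB : B ∈ C) (h : finrank F ↥A = finrank F ↥B) : A = B := by
  by_contra hne
  rcases hC.lt_or_lt hA hB hne with hlt | hlt <;>
    exact absurd h (by have := Submodule.finrank_lt_finrank_of_lt hlt; omega)

lemma IsFlag.le_of_rk_le {C : Finset (Submodule F V)} (hC : IsFlag C) {A B : Submodule F V}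
    (hA : A ∈ C) (hB : B ∈ C) (h : finrank F ↥A ≤ finrank F ↥B) : A ≤ B := by
  by_cases hne : A = B
  · exact hne.le
  rcases hC.lt_or_lt hA hB hne with hlt | hlt
  · exact hlt.le
  · exact absurd h (by have := Submodule.finrank_lt_finrank_of_lt hlt; omega)

lemma rk_pos {A : Submodule F V} (h : A ≠ ⊥) : 1 ≤ finrank F ↥A := by
  rw [Nat.one_le_iff_ne_zero]
  exact fun h0 => h (Submodule.finrank_eq_zero.mp h0)

lemma IsFlag.rk_mem_Icc {n : ℕ} (hV : finrank F V = n + 2) {C : Finset (Submodule F V)}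
    (hC : IsFlag C) {A : Submodule F V} (hA : A ∈ C) : finrank F ↥A ∈ Icc 1 (n + 1) := by
  obtain ⟨h1, h2⟩ := hC.2 A hA
  have := rk_pos h1
  have h3 : finrank F ↥A < finrank F V := Submodule.finrank_lt h2
  rw [hV] at h3
  simp only [mem_Icc]; omega

lemma IsFlag.card_le {n : ℕ} (hV : finrank F V = n + 2) {C : Finset (Submodule F V)}
    (hC : IsFlag C) : C.card ≤ n + 1 := by
  have himg : C.image (fun A : Submodule F V => finrank F ↥A) ⊆ Icc 1 (n + 1) := by
    intro α hα; obtain ⟨A, hA, rfl⟩ := mem_image.mp hα; exact hC.rk_mem_Icc hV hA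
  have := card_le_card himg
  rwa [card_image_of_injOn (fun A hA B hB h => hC.rk_injOn hA hB h), Nat.card_Icc,
    Nat.add_sub_cancel] at this

lemma IsFlag.rk_image {n : ℕ} (hV : finrank F V = n + 2) {C : Finset (Submodule F V)}
    (hC : IsFlag C) (hcard : C.card = n + 1) :
    C.image (fun A : Submodule F V => finrank F ↥A) = Icc 1 (n + 1) := by
  have himg : C.image (fun A : Submodule F V => finrank F ↥A) ⊆ Icc 1 (n + 1) := by
    intro α hα; obtain ⟨A, hA, rfl⟩ := mem_image.mp hα; exact hC.rk_mem_Icc hV hA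
  refine Finset.eq_of_subset_of_card_le himg ?_
  rw [card_image_of_injOn (fun A hA B hB h => hC.rk_injOn hA hB h), hcard, Nat.card_Icc]
  omega

lemma IsFlag.exists_rk {n : ℕ} (hV : finrank F V = n + 2) {C : Finset (Submodule F V)}
    (hC : IsFlag C) (hcard : C.card = n + 1) {α : ℕ} (hα : α ∈ Icc 1 (n + 1)) :
    ∃ Y ∈ C, finrank F ↥Y = α := by
  rw [← hC.rk_image hV hcard] at hα
  obtain ⟨Y, hY, h⟩ := mem_image.mp hα
  exact ⟨Y, hY, h⟩

lemma IsFlag.memd_eq {C : Finset (Submodule F V)} (hC : IsFlag C)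
    {Y : Submodule F V} {α : ℕ} (hY : Y ∈ C) (hr : finrank F ↥Y = α) : memd α C = Y := by
  have h : ∃ Y ∈ C, finrank F ↥Y = α := ⟨Y, hY, hr⟩
  obtain ⟨h1, h2⟩ := memd_mem h
  exact hC.rk_injOn h1 hY (h2.trans hr.symm)

lemma finrank_sup_span {X : Submodule F V} {x : V} (hx : x ∉ X) :
    finrank F ↥(X ⊔ Submodule.span F {x}) = finrank F ↥X + 1 := by
  have hx0 : x ≠ 0 := fun h => hx (h ▸ X.zero_mem)
  have hinf : X ⊓ Submodule.span F {x} = ⊥ := by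
    rw [eq_bot_iff]
    intro y hy
    rw [Submodule.mem_inf, Submodule.mem_span_singleton] at hy
    obtain ⟨hy1, hy2⟩ := hy
    obtain ⟨c, rfl⟩ := hy2
    rcases eq_or_ne c 0 with rfl | hc
    · simp
    · exact absurd (by simpa [hc, smul_smul] using X.smul_mem c⁻¹ hy1) hx
  have := Submodule.finrank_sup_add_finrank_inf_eq X (Submodule.span F {x})
  rw [hinf, finrank_span_singleton hx0] at this
  simpa using this

lemma exists_mid {A B : Submodule F V} (hAB : A ≤ B) :
    ∀ j, finrank F ↥A ≤ j → j ≤ finrank F ↥B → ∃ X, A ≤ X ∧ X ≤ B ∧ finrank F ↥X = j := by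
  intro j
  induction j with
  | zero => intro h1 _; exact ⟨A, le_refl _, hAB, by omega⟩
  | succ j ih =>
    intro h1 h2
    rcases Nat.lt_or_ge j (finrank F ↥A) with hj | hj
    · exact ⟨A, le_refl _, hAB, by omega⟩
    · obtain ⟨X, hAX, hXB, hX⟩ := ih hj (by omega)
      have hXBne : X ≠ B := fun h => by rw [h] at hX; omega
      obtain ⟨x, hxB, hxX⟩ := SetLike.exists_of_lt (lt_of_le_of_ne hXB hXBne)
      refine ⟨X ⊔ Submodule.span F {x}, le_trans hAX le_sup_left, ?_, ?_⟩
      · exact sup_le hXB ((Submodule.span_singleton_le_iff_mem x B).mpr hxB)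
      · rw [finrank_sup_span hxX, hX]

lemma flag_extend {n : ℕ} (hV : finrank F V = n + 2) :
    ∀ s : Finset (Submodule F V), IsFlag s → ∃ C, IsFlag C ∧ C.card = n + 1 ∧ s ⊆ C := by
  suffices H : ∀ k, ∀ s : Finset (Submodule F V), IsFlag s → n + 1 - s.card ≤ k →
      ∃ C, IsFlag C ∧ C.card = n + 1 ∧ s ⊆ C by
    exact fun s hs => H _ s hs le_rfl
  intro k
  induction k with
  | zero =>
    intro s hs hk
    have hle := hs.card_le hV
    have hcard : s.card = n + 1 := by omega
    exact ⟨s, hs, hcard, Finset.Subset.refl s⟩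
  | succ k ih =>
    intro s hs hk
    rcases eq_or_ne s.card (n+1) with hcard | hcard
    · exact ⟨s, hs, hcard, Finset.Subset.refl s⟩
    have hle := hs.card_le hV
    have himg : s.image (fun A : Submodule F V => finrank F ↥A) ⊆ Icc 1 (n + 1) := by
      intro α hα; obtain ⟨A, hA, rfl⟩ := mem_image.mp hα; exact hs.rk_mem_Icc hV hA
    have hcardimg : (s.image (fun A : Submodule F V => finrank F ↥A)).card = s.card :=
      card_image_of_injOn (fun A hA B hB h => hs.rk_injOn hA hB h)
    have hne : ∃ α ∈ Icc 1 (n+1), α ∉ s.image (fun A : Submodule F V => finrank F ↥A) := by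
      by_contra hcon
      push_neg at hcon
      have heq := Finset.eq_of_subset_of_card_le himg (Finset.card_le_card hcon)
      apply hcard
      rw [← hcardimg, heq, Nat.card_Icc]
      omega
    obtain ⟨α, hαIcc, hαnot⟩ := hne
    simp only [mem_Icc] at hαIcc
    set low := s.filter (fun Y : Submodule F V => finrank F ↥Y < α) with hlow
    set high := s.filter (fun Y : Submodule F V => α < finrank F ↥Y) with hhigh
    set A := low.sup id with hA
    set B := high.inf id with hB
    have hAfacts : finrank F ↥A < α ∧ ∀ Y ∈ low, Y ≤ A := by
      rcases low.eq_empty_or_nonempty with he | hne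
      · constructor
        · rw [hA, he, Finset.sup_empty, finrank_bot]; omega
        · rw [he]; simp
      · have hchain : IsChain (· ≤ ·) (low : Set (Submodule F V)) :=
          hs.1.mono (by intro x hx; simp at hx ⊢; exact (Finset.mem_filter.mp hx).1)
        have hmem := chain_sup_mem low hne hchain
        constructor
        · exact (Finset.mem_filter.mp hmem).2
        · exact fun Y hY => Finset.le_sup (f := id) hY
    have hBfacts : (α < finrank F ↥B ∨ B = ⊤) ∧ ∀ Y ∈ high, B ≤ Y := by
      rcases high.eq_empty_or_nonempty with he | hne
      · constructor
        · right; rw [hB, he]; simp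
        · rw [he]; simp
      · have hchain : IsChain (· ≤ ·) (high : Set (Submodule F V)) :=
          hs.1.mono (by intro x hx; simp at hx ⊢; exact (Finset.mem_filter.mp hx).1)
        have hmem := chain_inf_mem high hne hchain
        constructor
        · left; exact (Finset.mem_filter.mp hmem).2
        · exact fun Y hY => Finset.inf_le (f := id) hY
    have hAB : A ≤ B := by
      rcases low.eq_empty_or_nonempty with he | hnel
      · rw [hA, he]; simp
      rcases high.eq_empty_or_nonempty with he | hneh
      · rw [hB, he]; simp
      have hlm := chain_sup_mem low hnel
        (hs.1.mono (by intro x hx; simp at hx ⊢; exact (Finset.mem_filter.mp hx).1))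
      have hhm := chain_inf_mem high hneh
        (hs.1.mono (by intro x hx; simp at hx ⊢; exact (Finset.mem_filter.mp hx).1))
      have h1 := (Finset.mem_filter.mp hlm)
      have h2 := (Finset.mem_filter.mp hhm)
      have : A ≤ B ∨ B ≤ A := by
        rcases eq_or_ne A B with h | h
        · exact Or.inl h.le
        · rcases hs.lt_or_lt h1.1 h2.1 h with h' | h'
          · exact Or.inl h'.le
          · exact Or.inr h'.le
      rcases this with h | h
      · exact h
      · exfalso
        have hba := Submodule.finrank_mono h
        have h1 := hAfacts.1
        rcases hBfacts.1 with h2 | h2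
        · omega
        · rw [h2, finrank_top, hV] at hba; omega
    have hrkB : α ≤ finrank F ↥B := by
      rcases hBfacts.1 with h | h
      · omega
      · rw [h, finrank_top]; omega
    obtain ⟨X, hAX, hXB, hXrk⟩ := exists_mid hAB α (by omega) hrkB
    have hXnotmem : X ∉ s := by
      intro hmem
      exact hαnot (mem_image.mpr ⟨X, hmem, hXrk⟩)
    have hcomp : ∀ Y ∈ s, Y ≤ X ∨ X ≤ Y := by
      intro Y hY
      rcases Nat.lt_or_ge (finrank F ↥Y) α with h | h
      · exact Or.inl (le_trans (hAfacts.2 Y (Finset.mem_filter.mpr ⟨hY, h⟩)) hAX)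
      · have hne : finrank F ↥Y ≠ α := fun he => hαnot (mem_image.mpr ⟨Y, hY, he⟩)
        exact Or.inr (le_trans hXB (hBfacts.2 Y (Finset.mem_filter.mpr ⟨hY, by omega⟩)))
    have hflag : IsFlag (insert X s) := by
      constructor
      · intro Y hY Z hZ hne
        simp only [Finset.coe_insert, Set.mem_insert_iff] at hY hZ
        rcases hY with rfl | hY <;> rcases hZ with rfl | hZ
        · exact absurd rfl hne
        · rcases hcomp Z hZ with h | h
          · exact Or.inr h
          · exact Or.inl h
        · rcases hcomp Y hY with h | h
          · exact Or.inl h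
          · exact Or.inr h
        · exact hs.1 hY hZ hne
      · intro W hW
        rcases Finset.mem_insert.mp hW with rfl | hW
        · constructor
          · intro h; rw [h] at hXrk; rw [finrank_bot] at hXrk; omega
          · intro h; rw [h] at hXrk; rw [finrank_top, hV] at hXrk; omega
        · exact hs.2 W hW
    obtain ⟨C, hC1, hC2, hC3⟩ := ih (insert X s) hflag
      (by rw [Finset.card_insert_of_notMem hXnotmem]; omega)
    exact ⟨C, hC1, hC2, le_trans (Finset.subset_insert X s) hC3⟩

end FD

section Count
variable [Fintype (Submodule F V)]

def Chamb (n : ℕ) (s : Finset (Submodule F V)) : Finset (Finset (Submodule F V)) :=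
  univ.filter (fun C => IsFlag C ∧ C.card = n + 1 ∧ s ⊆ C)

lemma mem_Chamb {n : ℕ} {s C : Finset (Submodule F V)} :
    C ∈ Chamb n s ↔ IsFlag C ∧ C.card = n + 1 ∧ s ⊆ C := by
  simp [Chamb]

lemma flagCount_eq (n : ℕ) (s : Finset (Submodule F V)) :
    flagCount F n s = (Chamb n s).card := by
  rw [flagCount, Nat.card_eq_fintype_card, Fintype.card_subtype]
  apply Finset.card_bij (fun C _ => C) <;> simp [Chamb]

section FD
variable [FiniteDimensional F V]

lemma flagCount_pos {n : ℕ} (hV : finrank F V = n + 2) {s : Finset (Submodule F V)}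
    (hs : IsFlag s) : 0 < flagCount F n s := by
  obtain ⟨C, h1, h2, h3⟩ := flag_extend hV s hs
  rw [flagCount_eq, Finset.card_pos]
  exact ⟨C, mem_Chamb.mpr ⟨h1, h2, h3⟩⟩

lemma sum_chamb {n : ℕ} (hV : finrank F V = n + 2) {s : Finset (Submodule F V)} {α : ℕ}
    (hα : α ∈ Icc 1 (n + 1)) {M : Type*} [AddCommMonoid M] (G : Finset (Submodule F V) → M) :
    ∑ C ∈ Chamb n s, G C =
      ∑ U ∈ univ.filter (fun U : Submodule F V => finrank F ↥U = α),
        ∑ C ∈ Chamb n (insert U s), G C := by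
  have hmaps : ∀ C ∈ Chamb n s, memd α C ∈
      univ.filter (fun U : Submodule F V => finrank F ↥U = α) := by
    intro C hC
    obtain ⟨h1, h2, h3⟩ := mem_Chamb.mp hC
    exact mem_filter.mpr ⟨mem_univ _, (memd_mem (h1.exists_rk hV h2 hα)).2⟩
  rw [← Finset.sum_fiberwise_of_maps_to hmaps G]
  refine Finset.sum_congr rfl fun U hU => ?_
  have hUα : finrank F ↥U = α := (mem_filter.mp hU).2
  congr 1
  ext C
  simp only [mem_filter, mem_Chamb]
  constructor
  · rintro ⟨⟨h1, h2, h3⟩, h4⟩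
    refine ⟨h1, h2, Finset.insert_subset ?_ h3⟩
    rw [← h4]
    exact (memd_mem (h1.exists_rk hV h2 hα)).1
  · rintro ⟨h1, h2, h3⟩
    refine ⟨⟨h1, h2, (Finset.subset_insert U s).trans h3⟩, ?_⟩
    exact h1.memd_eq (h3 (Finset.mem_insert_self U s)) hUα

lemma card_Tset {n N : ℕ} (hV : finrank F V = n + 2) {Fl : Finset (Submodule F V)}
    (hF : IsFlag Fl) (hcard : Fl.card + N = n) : (Tset n Fl).card = N + 1 := by
  have himg : Fl.image (fun A : Submodule F V => finrank F ↥A) ⊆ Icc 1 (n + 1) := by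
    intro α hα; obtain ⟨A, hA, rfl⟩ := mem_image.mp hα; exact hF.rk_mem_Icc hV hA
  have heq : Tset n Fl = Icc 1 (n+1) \ Fl.image (fun A : Submodule F V => finrank F ↥A) := by
    ext α
    simp only [mem_Tset, mem_sdiff, mem_image]
    constructor
    · rintro ⟨h1, h2⟩
      exact ⟨h1, by rintro ⟨A, hA, rfl⟩; exact h2 A hA rfl⟩
    · rintro ⟨h1, h2⟩
      exact ⟨h1, fun U hU he => h2 ⟨U, hU, he⟩⟩
  rw [heq, Finset.card_sdiff_of_subset himg, Nat.card_Icc,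
    card_image_of_injOn (fun A hA B hB h => hF.rk_injOn hA hB h)]
  omega

lemma VertF.rk_mem {n : ℕ} (hV : finrank F V = n + 2) {Fl : Finset (Submodule F V)}
    {W : Submodule F V} (hW : VertF Fl W) : finrank F ↥W ∈ Tset n Fl := by
  refine mem_Tset.mpr ⟨hW.2.rk_mem_Icc hV (Finset.mem_insert_self W Fl), ?_⟩
  intro U hU he
  exact hW.1 (hW.2.rk_injOn (Finset.mem_insert_of_mem hU) (Finset.mem_insert_self W Fl) he ▸ hU)

lemma vert_of_chamb {n : ℕ} {Fl : Finset (Submodule F V)} {C : Finset (Submodule F V)}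
    (hC : IsFlag C) (hFl : Fl ⊆ C) {Y : Submodule F V} (hY : Y ∈ C)
    (hrk : finrank F ↥Y ∈ Tset n Fl) : VertF Fl Y := by
  constructor
  · intro hmem
    exact (mem_Tset.mp hrk).2 Y hmem rfl
  · exact hC.subset (Finset.insert_subset hY hFl)

lemma lapF_eq {n N : ℕ} (hV : finrank F V = n + 2) {Fl : Finset (Submodule F V)}
    (hF : IsFlag Fl) (hcard : Fl.card + N = n) (f : Submodule F V → ℝ) {W : Submodule F V}
    (hW : VertF Fl W) :
    lapF F n Fl f W = ((N : ℝ) + 1) * f W -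
      (∑ C ∈ Chamb n (insert W Fl), ∑ α ∈ Tset n Fl, f (memd α C)) /
        ((flagCount F n (insert W Fl) : ℝ)) := by
  have hτT : finrank F ↥W ∈ Tset n Fl := hW.rk_mem hV
  have hTcard : (Tset n Fl).card = N + 1 := card_Tset hV hF hcard
  have hsflag : IsFlag (insert W Fl) := hW.2
  have hwpos : 0 < flagCount F n (insert W Fl) := flagCount_pos hV hsflag
  have hwne : ((flagCount F n (insert W Fl) : ℝ)) ≠ 0 := by positivity
  set T' : Finset ℕ := (Tset n Fl).erase (finrank F ↥W) with hT'
  have hA : ∀ U : Submodule F V,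
      (if U ≠ W ∧ VertF Fl U ∧ IsFlag (insert U (insert W Fl)) then
        ((flagCount F n (insert U (insert W Fl)) : ℝ)) * (f W - f U) else 0)
      = (if finrank F ↥U ∈ T' then
        ((flagCount F n (insert U (insert W Fl)) : ℝ)) * (f W - f U) else 0) := by
    intro U
    by_cases hc : U ≠ W ∧ VertF Fl U ∧ IsFlag (insert U (insert W Fl))
    · rw [if_pos hc, if_pos ?_]
      refine Finset.mem_erase.mpr ⟨?_, hc.2.1.rk_mem hV⟩
      intro he
      exact hc.1 (hc.2.2.rk_injOn (Finset.mem_insert_self _ _)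
        (Finset.mem_insert_of_mem (Finset.mem_insert_self W Fl)) he)
    · rw [if_neg hc]
      by_cases hm : finrank F ↥U ∈ T'
      · rw [if_pos hm]
        suffices h0 : flagCount F n (insert U (insert W Fl)) = 0 by rw [h0]; simp
        by_contra h0
        have hpos : 0 < (Chamb n (insert U (insert W Fl))).card := by
          rw [← flagCount_eq]; omega
        obtain ⟨C, hC⟩ := Finset.card_pos.mp hpos
        rw [mem_Chamb] at hC
        have hflagUs : IsFlag (insert U (insert W Fl)) := hC.1.subset hC.2.2
        apply hc
        obtain ⟨hne, hTm⟩ := Finset.mem_erase.mp hm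
        have hUT := (mem_Tset.mp hTm).2
        refine ⟨fun he => hne (by rw [he]), ⟨fun hUFl => hUT U hUFl rfl, ?_⟩, hflagUs⟩
        exact hflagUs.subset (Finset.insert_subset_insert _ (Finset.subset_insert _ _))
      · rw [if_neg hm]
  rw [lapF, Finset.sum_congr rfl (fun U _ => hA U)]
  have hB : (∑ U : Submodule F V, if finrank F ↥U ∈ T' then
        ((flagCount F n (insert U (insert W Fl)) : ℝ)) * (f W - f U) else 0)
      = ∑ α ∈ T', ∑ U ∈ univ.filter (fun U : Submodule F V => finrank F ↥U = α),
        ((flagCount F n (insert U (insert W Fl)) : ℝ)) * (f W - f U) := by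
    rw [← Finset.sum_filter]
    rw [← Finset.sum_fiberwise_of_maps_to
      (g := fun U : Submodule F V => finrank F ↥U)
      (fun U hU => (mem_filter.mp hU).2)]
    refine Finset.sum_congr rfl fun α hα => ?_
    congr 1
    ext U
    simp only [mem_filter, mem_univ, true_and]
    exact ⟨fun h => h.2, fun h => ⟨h ▸ hα, h⟩⟩
  rw [hB]
  have hCs : ∀ α ∈ T', ∑ U ∈ univ.filter (fun U : Submodule F V => finrank F ↥U = α),
      ((flagCount F n (insert U (insert W Fl)) : ℝ)) * (f W - f U)
      = ∑ C ∈ Chamb n (insert W Fl), (f W - f (memd α C)) := by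
    intro α hα
    have hαIcc : α ∈ Icc 1 (n+1) := Tset_subset_Icc (Finset.mem_of_mem_erase hα)
    rw [sum_chamb hV hαIcc (fun C => f W - f (memd α C))]
    refine Finset.sum_congr rfl fun U hU => ?_
    have hUα : finrank F ↥U = α := (mem_filter.mp hU).2
    have hconst : ∀ C ∈ Chamb n (insert U (insert W Fl)),
        f W - f (memd α C) = f W - f U := by
      intro C hCm
      obtain ⟨h1, h2, h3⟩ := mem_Chamb.mp hCm
      rw [h1.memd_eq (h3 (Finset.mem_insert_self _ _)) hUα]
    rw [Finset.sum_congr rfl hconst, Finset.sum_const, flagCount_eq, nsmul_eq_mul]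
  rw [Finset.sum_congr rfl hCs]
  rw [Finset.sum_comm]
  have hD : ∀ C ∈ Chamb n (insert W Fl),
      ∑ α ∈ T', (f W - f (memd α C)) =
        ((N : ℝ) + 1) * f W - ∑ α ∈ Tset n Fl, f (memd α C) := by
    intro C hCm
    obtain ⟨h1, h2, h3⟩ := mem_Chamb.mp hCm
    have hmemW : memd (finrank F ↥W) C = W :=
      h1.memd_eq (h3 (Finset.mem_insert_self _ _)) rfl
    have hce : T'.card = N := by rw [hT', Finset.card_erase_of_mem hτT, hTcard]; omega
    have hsplit : ∑ α ∈ T', f (memd α C) = (∑ α ∈ Tset n Fl, f (memd α C)) - f W := by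
      rw [hT', ← Finset.add_sum_erase _ _ hτT, hmemW]
      ring
    rw [Finset.sum_sub_distrib, Finset.sum_const, hsplit, hce, nsmul_eq_mul]
    ring
  rw [Finset.sum_congr rfl hD, Finset.sum_sub_distrib, Finset.sum_const, nsmul_eq_mul,
    ← flagCount_eq, sub_div, mul_comm ((flagCount F n (insert W Fl) : ℝ)),
    mul_div_assoc, div_self hwne, mul_one]

end FD
end Count

/-- Adjacency of chambers: they differ in at most one element. -/
def AdjC (C C' : Finset (Submodule F V)) : Prop :=
  ∃ U U', U ∈ C ∧ U' ∈ C' ∧ C.erase U = C'.erase U'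

section Conn
variable [Fintype (Submodule F V)] [FiniteDimensional F V]

lemma conn {n : ℕ} (hV : finrank F V = n + 2) {Fl : Finset (Submodule F V)} :
    ∀ α : ℕ, ∀ C C' : Finset (Submodule F V), C ∈ Chamb n Fl → C' ∈ Chamb n Fl →
      (∀ β, α < β → β ≤ n + 1 → memd β C = memd β C') →
      Relation.ReflTransGen (fun X Y => Y ∈ Chamb n Fl ∧ AdjC X Y) C C' := by
  intro α
  induction α with
  | zero =>
    intro C C' hC hC' hagr
    obtain ⟨hf, hcd, hsub⟩ := mem_Chamb.mp hC
    obtain ⟨hf', hcd', hsub'⟩ := mem_Chamb.mp hC'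
    have hEq : C = C' := by
      ext Y
      constructor
      · intro hY
        have hrk := hf.rk_mem_Icc hV hY; rw [mem_Icc] at hrk
        have hm := hf.memd_eq hY rfl
        rw [← hm, hagr _ (by omega) (by omega)]
        exact (memd_mem (hf'.exists_rk hV hcd' (mem_Icc.mpr (by omega)))).1
      · intro hY
        have hrk := hf'.rk_mem_Icc hV hY; rw [mem_Icc] at hrk
        have hm := hf'.memd_eq hY rfl
        rw [← hm, ← hagr _ (by omega) (by omega)]
        exact (memd_mem (hf.exists_rk hV hcd (mem_Icc.mpr (by omega)))).1
    rw [hEq]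
  | succ α ih =>
    intro C C' hC hC' hagr
    by_cases hτ : α + 1 ≤ n + 1
    · obtain ⟨hf', hcd', hsub'⟩ := mem_Chamb.mp hC'
      have hIcc1 : (α + 1 : ℕ) ∈ Icc 1 (n + 1) := mem_Icc.mpr (by omega)
      set U' := memd (α + 1) C' with hU'
      have hU'mem : U' ∈ C' ∧ finrank F ↥U' = α + 1 :=
        memd_mem (hf'.exists_rk hV hcd' hIcc1)
      suffices H : ∀ k : ℕ, ∀ C : Finset (Submodule F V), C ∈ Chamb n Fl →
          (∀ β, α + 1 < β → β ≤ n + 1 → memd β C = memd β C') →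
          (α + 1) - finrank F ↥(memd (α + 1) C ⊓ U') ≤ k →
          Relation.ReflTransGen (fun X Y => Y ∈ Chamb n Fl ∧ AdjC X Y) C C' by
        exact H (α + 1) C hC (fun β h1 h2 => hagr β (by omega) h2) (Nat.sub_le _ _)
      intro k
      induction k with
      | zero =>
        intro C hCm hagr2 hfuel
        obtain ⟨hf, hcd, hsub⟩ := mem_Chamb.mp hCm
        have hUmem : memd (α + 1) C ∈ C ∧ finrank F ↥(memd (α + 1) C) = α + 1 :=
          memd_mem (hf.exists_rk hV hcd hIcc1)
        have hdge : α + 1 ≤ finrank F ↥(memd (α + 1) C ⊓ U') := by omega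
        have hDU : memd (α + 1) C ⊓ U' = memd (α + 1) C :=
          Submodule.eq_of_le_of_finrank_le inf_le_left (by omega)
        have heq : memd (α + 1) C = U' := by
          refine Submodule.eq_of_le_of_finrank_le ?_ (by omega)
          rw [← hDU]; exact inf_le_right
        refine ih C C' hCm hC' ?_
        intro β h1 h2
        rcases eq_or_lt_of_le (Nat.succ_le_of_lt h1) with h3 | h3
        · rw [← h3] at h2 ⊢; rw [heq]
        · exact hagr2 β h3 h2
      | succ k ihk =>
        intro C hCm hagr2 hfuel
        by_cases heq : memd (α + 1) C = U'
        · refine ih C C' hCm hC' ?_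
          intro β h1 h2
          rcases eq_or_lt_of_le (Nat.succ_le_of_lt h1) with h3 | h3
          · rw [← h3] at h2 ⊢; rw [heq]
          · exact hagr2 β h3 h2
        · -- main construction
          obtain ⟨hf, hcd, hsub⟩ := mem_Chamb.mp hCm
          set U := memd (α + 1) C with hU
          have hUmem : U ∈ C ∧ finrank F ↥U = α + 1 := memd_mem (hf.exists_rk hV hcd hIcc1)
          have hnle : ¬ (U' ≤ U) := by
            intro h
            exact heq (Submodule.eq_of_le_of_finrank_le h (by omega)).symm
          obtain ⟨x, hxU', hxU⟩ := SetLike.not_le_iff_exists.mp hnle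
          set D := U ⊓ U' with hD
          have hdle : finrank F ↥D ≤ α + 1 := by
            rw [hD]
            have := Submodule.finrank_mono (inf_le_left (a := U) (b := U'))
            omega
          have hdlt : finrank F ↥D < α + 1 := by
            rcases eq_or_lt_of_le hdle with h | h
            · exfalso
              have hDU : D = U := Submodule.eq_of_le_of_finrank_le inf_le_left (by omega)
              exact heq (Submodule.eq_of_le_of_finrank_le
                (by rw [← hDU]; exact inf_le_right) (by omega))
            · exact h
          have hxD : x ∉ D := fun h => hxU ((Submodule.mem_inf.mp h).1)
          have hrkX' : finrank F ↥(D ⊔ Submodule.span F {x}) = finrank F ↥D + 1 :=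
            finrank_sup_span hxD
          have hrkBig : finrank F ↥(U ⊔ Submodule.span F {x}) = α + 2 := by
            rw [finrank_sup_span hxU, hUmem.2]
          have hDle : D ⊔ Submodule.span F {x} ≤ U ⊔ Submodule.span F {x} :=
            sup_le_sup_right inf_le_left _
          obtain ⟨X, hX1, hX2, hX3⟩ := exists_mid hDle (α + 1) (by omega) (by omega)
          have hxX : x ∈ X := hX1 (Submodule.mem_sup_right (Submodule.mem_span_singleton_self x))
          have hXU : X ≠ U := fun h => hxU (h ▸ hxX)
          have hDX : D ≤ X := le_trans le_sup_left hX1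
          have hXcapU' : α + 1 - finrank F ↥(X ⊓ U') ≤ k := by
            have hle2 : D ⊔ Submodule.span F {x} ≤ X ⊓ U' :=
              le_inf hX1 (sup_le inf_le_right
                ((Submodule.span_singleton_le_iff_mem x U').mpr hxU'))
            have := Submodule.finrank_mono hle2
            omega
          have hUXsup : U ⊔ X = U ⊔ Submodule.span F {x} := by
            refine le_antisymm (sup_le le_sup_left hX2) (sup_le le_sup_left ?_)
            exact le_trans ((Submodule.span_singleton_le_iff_mem x X).mpr hxX) le_sup_right
          have hUXrk : finrank F ↥(U ⊓ X) = α := by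
            have h5 := Submodule.finrank_sup_add_finrank_inf_eq U X
            rw [hUXsup, hrkBig, hUmem.2, hX3] at h5
            omega
          -- the partial flag s2
          set s1 := C.filter (fun Y : Submodule F V => α + 1 ≤ finrank F ↥Y) with hs1
          have hs1sub : s1 ⊆ C := filter_subset _ _
          have hUs1 : U ∈ s1 := mem_filter.mpr ⟨hUmem.1, le_of_eq hUmem.2.symm⟩
          have hFls1 : ∀ Y ∈ Fl, α + 1 ≤ finrank F ↥Y → Y ∈ s1 :=
            fun Y hY h => mem_filter.mpr ⟨hsub hY, h⟩
          have hFlD : ∀ Y ∈ Fl, finrank F ↥Y < α + 1 → Y ≤ D := by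
            intro Y hY hylt
            exact le_inf (hf.le_of_rk_le (hsub hY) hUmem.1 (by omega))
              (hf'.le_of_rk_le (hsub' hY) hU'mem.1 (by omega))
          set s2 := if α = 0 then Fl ∪ s1 else insert (U ⊓ X) (Fl ∪ s1) with hs2
          have hUXle : ∀ Z ∈ Fl ∪ s1, U ⊓ X ≤ Z ∨ Z ≤ U ⊓ X := by
            intro Z hZ
            rcases mem_union.mp hZ with hZ' | hZ'
            · rcases Nat.lt_or_ge (finrank F ↥Z) (α + 1) with h | h
              · exact Or.inr (le_trans (hFlD Z hZ' h) (le_inf inf_le_left hDX))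
              · exact Or.inl (le_trans inf_le_left (hf.le_of_rk_le hUmem.1
                  (hsub hZ') (by omega)))
            · obtain ⟨hZC, hZr⟩ := mem_filter.mp hZ'
              exact Or.inl (le_trans inf_le_left (hf.le_of_rk_le hUmem.1 hZC (by omega)))
          have hFlUs1flag : IsFlag (Fl ∪ s1) := by
            constructor
            · intro Y hY Z hZ hne
              have hYC : Y ∈ C := by
                rcases mem_union.mp (by exact_mod_cast hY) with h | h
                exacts [hsub h, hs1sub h]
              have hZC : Z ∈ C := by
                rcases mem_union.mp (by exact_mod_cast hZ) with h | h
                exacts [hsub h, hs1sub h]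
              exact hf.1 (by exact_mod_cast hYC) (by exact_mod_cast hZC) hne
            · intro Y hY
              have hYC : Y ∈ C := by
                rcases mem_union.mp hY with h | h
                exacts [hsub h, hs1sub h]
              exact hf.2 Y hYC
          have hs2flag : IsFlag s2 := by
            rcases Nat.eq_zero_or_pos α with hα0 | hα0
            · rw [hs2, if_pos hα0]; exact hFlUs1flag
            · rw [hs2, if_neg (by omega)]
              constructor
              · intro Y hY Z hZ hne
                simp only [Finset.coe_insert, Set.mem_insert_iff] at hY hZ
                rcases hY with rfl | hY <;> rcases hZ with rfl | hZ
                · exact absurd rfl hne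
                · rcases hUXle Z (by exact_mod_cast hZ) with h | h
                  · exact Or.inl h
                  · exact Or.inr h
                · rcases hUXle Y (by exact_mod_cast hY) with h | h
                  · exact Or.inr h
                  · exact Or.inl h
                · exact hFlUs1flag.1 hY hZ hne
              · intro Y hY
                rcases Finset.mem_insert.mp hY with rfl | hY
                · constructor
                  · intro h; rw [h, finrank_bot] at hUXrk; omega
                  · intro h; rw [h, finrank_top, hV] at hUXrk; omega
                · exact hFlUs1flag.2 Y hY
          obtain ⟨C₁, hC₁f, hC₁cd, hC₁sub⟩ := flag_extend hV s2 hs2flag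
          have hFls2 : Fl ⊆ s2 := by
            intro Y hY
            rcases Nat.eq_zero_or_pos α with hα0 | hα0
            · rw [hs2, if_pos hα0]; exact mem_union_left _ hY
            · rw [hs2, if_neg (by omega)]
              exact Finset.mem_insert_of_mem (mem_union_left _ hY)
          have hs1s2 : s1 ⊆ s2 := by
            intro Y hY
            rcases Nat.eq_zero_or_pos α with hα0 | hα0
            · rw [hs2, if_pos hα0]; exact mem_union_right _ hY
            · rw [hs2, if_neg (by omega)]
              exact Finset.mem_insert_of_mem (mem_union_right _ hY)
          have hC₁mem : C₁ ∈ Chamb n Fl := mem_Chamb.mpr ⟨hC₁f, hC₁cd, hFls2.trans hC₁sub⟩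
          have hmemd₁ : ∀ β, α + 1 ≤ β → β ≤ n + 1 → memd β C₁ = memd β C := by
            intro β h1 h2
            have hb : memd β C ∈ C ∧ finrank F ↥(memd β C) = β :=
              memd_mem (hf.exists_rk hV hcd (mem_Icc.mpr (by omega)))
            have : memd β C ∈ s1 := mem_filter.mpr ⟨hb.1, by omega⟩
            exact hC₁f.memd_eq (hC₁sub (hs1s2 this)) hb.2
          have hUC₁ : U ∈ C₁ := hC₁sub (hs1s2 hUs1)
          have hXC₁ : X ∉ C₁ := by
            intro h
            exact hXU (hC₁f.rk_injOn h hUC₁ (by omega))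
          -- the new chamber C₂
          set C₂ := insert X (C₁.erase U) with hC₂
          have hXe : X ∉ C₁.erase U := fun h => hXC₁ (Finset.mem_of_mem_erase h)
          have hC₂comp : ∀ Z ∈ C₁.erase U, Z ≤ X ∨ X ≤ Z := by
            intro Z hZ
            have hZC₁ : Z ∈ C₁ := Finset.mem_of_mem_erase hZ
            have hZU : Z ≠ U := Finset.ne_of_mem_erase hZ
            have hZr : finrank F ↥Z ≠ α + 1 := by
              intro h; exact hZU (hC₁f.rk_injOn hZC₁ hUC₁ (by omega))
            have hZIcc := hC₁f.rk_mem_Icc hV hZC₁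
            rw [mem_Icc] at hZIcc
            rcases Nat.lt_or_ge (finrank F ↥Z) (α + 1) with h | h
            · -- Z is low, α ≥ 1 and Z ≤ U ⊓ X ≤ X
              have hα0 : 0 < α := by omega
              have hUXC₁ : U ⊓ X ∈ C₁ := by
                refine hC₁sub ?_
                rw [hs2, if_neg (by omega)]
                exact Finset.mem_insert_self _ _
              exact Or.inl (le_trans (hC₁f.le_of_rk_le hZC₁ hUXC₁ (by omega)) inf_le_right)
            · -- Z is high: X ≤ B ≤ Z with B the rank α+2 member
              have hβ : α + 2 ≤ n + 1 := by omega
              have hBC : memd (α + 2) C ∈ C ∧ finrank F ↥(memd (α + 2) C) = α + 2 :=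
                memd_mem (hf.exists_rk hV hcd (mem_Icc.mpr (by omega)))
              have hBC' : memd (α + 2) C' ∈ C' ∧ finrank F ↥(memd (α + 2) C') = α + 2 :=
                memd_mem (hf'.exists_rk hV hcd' (mem_Icc.mpr (by omega)))
              have hBeq : memd (α + 2) C = memd (α + 2) C' := hagr2 (α + 2) (by omega) hβ
              have hUB : U ≤ memd (α + 2) C := hf.le_of_rk_le hUmem.1 hBC.1 (by omega)
              have hxB : x ∈ memd (α + 2) C := by
                rw [hBeq]
                exact hf'.le_of_rk_le hU'mem.1 hBC'.1 (by omega) hxU'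
              have hXB : X ≤ memd (α + 2) C :=
                le_trans hX2 (sup_le hUB
                  ((Submodule.span_singleton_le_iff_mem x _).mpr hxB))
              have hBC₁ : memd (α + 2) C ∈ C₁ := by
                have : memd (α + 2) C ∈ s1 := mem_filter.mpr ⟨hBC.1, by omega⟩
                exact hC₁sub (hs1s2 this)
              exact Or.inr (le_trans hXB (hC₁f.le_of_rk_le hBC₁ hZC₁ (by omega)))
          have hC₂f : IsFlag C₂ := by
            constructor
            · intro Y hY Z hZ hne
              simp only [hC₂, Finset.coe_insert, Set.mem_insert_iff] at hY hZ
              rcases hY with rfl | hY <;> rcases hZ with rfl | hZ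
              · exact absurd rfl hne
              · rcases hC₂comp Z (by exact_mod_cast hZ) with h | h
                · exact Or.inr h
                · exact Or.inl h
              · rcases hC₂comp Y (by exact_mod_cast hY) with h | h
                · exact Or.inl h
                · exact Or.inr h
              · exact hC₁f.1 (by exact_mod_cast (Finset.mem_of_mem_erase hY))
                  (by exact_mod_cast (Finset.mem_of_mem_erase hZ)) hne
            · intro Y hY
              rcases Finset.mem_insert.mp hY with rfl | hY
              · constructor
                · intro h; rw [h, finrank_bot] at hX3; omega
                · intro h; rw [h, finrank_top, hV] at hX3; omega
              · exact hC₁f.2 Y (Finset.mem_of_mem_erase hY)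
          have hC₂cd : C₂.card = n + 1 := by
            rw [hC₂, Finset.card_insert_of_notMem hXe, Finset.card_erase_of_mem hUC₁, hC₁cd]; omega
          have hUFl : U ∉ Fl := by
            intro h
            exact heq ((hf'.memd_eq (hsub' h) hUmem.2).symm.trans hU'.symm)
          have hC₂sub : Fl ⊆ C₂ := by
            intro Y hY
            refine Finset.mem_insert_of_mem (Finset.mem_erase.mpr ⟨?_, hFls2.trans hC₁sub hY⟩)
            rintro rfl
            exact hUFl hY
          have hC₂mem : C₂ ∈ Chamb n Fl := mem_Chamb.mpr ⟨hC₂f, hC₂cd, hC₂sub⟩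
          have hAdj12 : AdjC C₁ C₂ :=
            ⟨U, X, hUC₁, Finset.mem_insert_self _ _, by rw [hC₂, Finset.erase_insert hXe]⟩
          -- agreement of C₂ with C' above α+1 and fuel bound
          have hmemd₂ : ∀ β, α + 1 < β → β ≤ n + 1 → memd β C₂ = memd β C' := by
            intro β h1 h2
            have hb : memd β C ∈ C ∧ finrank F ↥(memd β C) = β :=
              memd_mem (hf.exists_rk hV hcd (mem_Icc.mpr (by omega)))
            have hbC₁ : memd β C ∈ C₁ := hC₁sub (hs1s2 (mem_filter.mpr ⟨hb.1, by omega⟩))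
            have hbne : memd β C ≠ U := by
              intro h
              rw [h, hUmem.2] at hb
              omega
            have hbC₂ : memd β C ∈ C₂ :=
              Finset.mem_insert_of_mem (Finset.mem_erase.mpr ⟨hbne, hbC₁⟩)
            rw [hC₂f.memd_eq hbC₂ hb.2]
            exact hagr2 β h1 h2
          have hmemd₂X : memd (α + 1) C₂ = X :=
            hC₂f.memd_eq (Finset.mem_insert_self _ _) hX3
          have hfuel₂ : (α + 1) - finrank F ↥(memd (α + 1) C₂ ⊓ U') ≤ k := by
            rw [hmemd₂X]; exact hXcapU'
          -- assemble the gallery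
          have hstep1 : Relation.ReflTransGen
              (fun X Y => Y ∈ Chamb n Fl ∧ AdjC X Y) C C₁ := by
            refine ih C C₁ hCm hC₁mem ?_
            intro β h1 h2
            exact (hmemd₁ β (by omega) h2).symm
          have hstep3 := ihk C₂ hC₂mem hmemd₂ hfuel₂
          exact hstep1.trans (Relation.ReflTransGen.head ⟨hC₂mem, hAdj12⟩ hstep3)
    · refine ih C C' hC hC' ?_
      intro β h1 h2
      exact absurd h2 (by omega)

end Conn

lemma sq_ident {ι : Type*} (s : Finset ι) (x : ι → ℝ) :
    ∑ a ∈ s, ∑ b ∈ s, (x a - x b)^2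
      = 2 * (((s.card : ℝ) * (∑ a ∈ s, (x a)^2)) - (∑ a ∈ s, x a)^2) := by
  have hL : ∑ a ∈ s, ∑ b ∈ s, (x a - x b)^2
      = ∑ a ∈ s, ((s.card : ℝ) * (x a)^2 - 2 * x a * (∑ b ∈ s, x b) + ∑ b ∈ s, (x b)^2) := by
    refine Finset.sum_congr rfl fun a _ => ?_
    have h1 : ∀ b ∈ s, (x a - x b)^2 = (x a)^2 - (2 * x a) * x b + (x b)^2 :=
      fun b _ => by ring
    rw [Finset.sum_congr rfl h1, Finset.sum_add_distrib, Finset.sum_sub_distrib,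
      Finset.sum_const, nsmul_eq_mul, ← Finset.mul_sum]
  have e1 : ∑ a ∈ s, (s.card : ℝ) * (x a)^2 = (s.card : ℝ) * ∑ a ∈ s, (x a)^2 :=
    (Finset.mul_sum _ _ _).symm
  have e3 : ∑ _a ∈ s, (∑ b ∈ s, (x b)^2) = (s.card : ℝ) * ∑ b ∈ s, (x b)^2 := by
    rw [Finset.sum_const, nsmul_eq_mul]
  have h2 : ∑ a ∈ s, 2 * x a * (∑ b ∈ s, x b) = 2 * ((∑ a ∈ s, x a) * (∑ b ∈ s, x b)) := by
    have : ∀ a ∈ s, 2 * x a * (∑ b ∈ s, x b) = x a * (2 * (∑ b ∈ s, x b)) :=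
      fun a _ => by ring
    rw [Finset.sum_congr rfl this, ← Finset.sum_mul]
    ring
  rw [hL, Finset.sum_add_distrib, Finset.sum_sub_distrib, e1, e3, h2]
  ring

lemma sq_le_card {ι : Type*} (s : Finset ι) (x : ι → ℝ) :
    (∑ a ∈ s, x a)^2 ≤ (s.card : ℝ) * ∑ a ∈ s, (x a)^2 := by
  nlinarith [sq_ident s x, Finset.sum_nonneg
    (fun a (_ : a ∈ s) => Finset.sum_nonneg (fun b (_ : b ∈ s) => sq_nonneg (x a - x b)))]

lemma sq_eq_const {ι : Type*} {s : Finset ι} {x : ι → ℝ}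
    (h : ((s.card : ℝ) * ∑ a ∈ s, (x a)^2) - (∑ a ∈ s, x a)^2 = 0) :
    ∀ a ∈ s, ∀ b ∈ s, x a = x b := by
  have hz : ∑ a ∈ s, ∑ b ∈ s, (x a - x b)^2 = 0 := by
    rw [sq_ident, h]
    ring
  intro a ha b hb
  have h1 := (Finset.sum_eq_zero_iff_of_nonneg
    (fun a _ => Finset.sum_nonneg (fun b _ => sq_nonneg (x a - x b)))).mp hz a ha
  have h2 := (Finset.sum_eq_zero_iff_of_nonneg
    (fun b _ => sq_nonneg (x a - x b))).mp h1 b hb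
  have h3 := sq_eq_zero_iff.mp h2
  linarith

section Conn2
variable [Fintype (Submodule F V)] [FiniteDimensional F V]

lemma rtg_mem {n : ℕ} {Fl : Finset (Submodule F V)} {C C' : Finset (Submodule F V)}
    (hC : C ∈ Chamb n Fl)
    (h : Relation.ReflTransGen (fun X Y => Y ∈ Chamb n Fl ∧ AdjC X Y) C C') :
    C' ∈ Chamb n Fl := by
  induction h with
  | refl => exact hC
  | tail _ hbc _ => exact hbc.1

lemma rtg_const {n : ℕ} {Fl : Finset (Submodule F V)} {g : Finset (Submodule F V) → ℝ}
    (hg : ∀ C C', C ∈ Chamb n Fl → C' ∈ Chamb n Fl → AdjC C C' → g C = g C')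
    {C C' : Finset (Submodule F V)} (hC : C ∈ Chamb n Fl)
    (h : Relation.ReflTransGen (fun X Y => Y ∈ Chamb n Fl ∧ AdjC X Y) C C') :
    g C = g C' := by
  induction h with
  | refl => rfl
  | @tail b c hab hbc ih => exact ih.trans (hg b c (rtg_mem hC hab) hbc.1 hbc.2)

lemma chamb_const {n : ℕ} (hV : finrank F V = n + 2) {Fl : Finset (Submodule F V)}
    {g : Finset (Submodule F V) → ℝ}
    (hg : ∀ C C', C ∈ Chamb n Fl → C' ∈ Chamb n Fl → AdjC C C' → g C = g C')
    {C C' : Finset (Submodule F V)} (hC : C ∈ Chamb n Fl) (hC' : C' ∈ Chamb n Fl) :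
    g C = g C' :=
  rtg_const hg hC (conn hV (n + 1) C C' hC hC' (fun β h1 h2 => absurd h2 (by omega)))

lemma adj_cases {n : ℕ} (hV : finrank F V = n + 2) {Fl : Finset (Submodule F V)}
    {C C' : Finset (Submodule F V)} (hC : C ∈ Chamb n Fl) (hC' : C' ∈ Chamb n Fl)
    (h : AdjC C C') :
    C = C' ∨ ∃ β ∈ Tset n Fl,
      ∀ γ ∈ Icc 1 (n + 1), γ ≠ β → memd γ C = memd γ C' := by
  by_cases hCC : C = C'
  · exact Or.inl hCC
  right
  obtain ⟨U, U', hU, hU', hE⟩ := h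
  obtain ⟨hf, hcd, hsub⟩ := mem_Chamb.mp hC
  obtain ⟨hf', hcd', hsub'⟩ := mem_Chamb.mp hC'
  have hUU' : U ≠ U' := by
    rintro rfl
    apply hCC
    rw [← Finset.insert_erase hU, hE, Finset.insert_erase hU']
  have hUC' : U ∉ C' := by
    intro hmem
    have : U ∈ C'.erase U' := Finset.mem_erase.mpr ⟨hUU', hmem⟩
    rw [← hE] at this
    exact (Finset.notMem_erase U C) this
  have hU'C : U' ∉ C := by
    intro hmem
    have : U' ∈ C.erase U := Finset.mem_erase.mpr ⟨Ne.symm hUU', hmem⟩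
    rw [hE] at this
    exact (Finset.notMem_erase U' C') this
  have hrk : finrank F ↥U = finrank F ↥U' := by
    by_contra hne
    have hrkU' := hf'.rk_mem_Icc hV hU'
    obtain ⟨Y, hY, hYrk⟩ := hf.exists_rk hV hcd hrkU'
    have hYU : Y ≠ U := fun hh => hne (by rw [← hh, hYrk])
    have hYC' : Y ∈ C' := by
      have : Y ∈ C.erase U := Finset.mem_erase.mpr ⟨hYU, hY⟩
      rw [hE] at this
      exact Finset.mem_of_mem_erase this
    exact hU'C (hf'.rk_injOn hYC' hU' hYrk ▸ hY)
  refine ⟨finrank F ↥U, ?_, ?_⟩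
  · refine mem_Tset.mpr ⟨hf.rk_mem_Icc hV hU, ?_⟩
    intro Y hY he
    have h1 : Y = U := hf.rk_injOn (hsub hY) hU he
    have h2 : Y = U' := hf'.rk_injOn (hsub' hY) hU' (by rw [he, hrk])
    exact hUU' (h1 ▸ h2 ▸ rfl)
  · intro γ hγ hne
    obtain ⟨Y, hY, hYrk⟩ := hf.exists_rk hV hcd hγ
    have hYU : Y ≠ U := fun hh => hne (by rw [← hh, hYrk])
    have hYC' : Y ∈ C' := by
      have : Y ∈ C.erase U := Finset.mem_erase.mpr ⟨hYU, hY⟩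
      rw [hE] at this
      exact Finset.mem_of_mem_erase this
    rw [hf.memd_eq hY hYrk, hf'.memd_eq hYC' hYrk]

end Conn2

/-- on `C^0(X_F)` (for a flag complex of dimension `N ≥ 1`):
every type-constant function whose type values sum to zero is a `Δ`-eigenfunction
with eigenvalue `N+1`; every eigenfunction with eigenvalue `0` is constant; every
eigenfunction with eigenvalue `N+1` is type-constant with type values summing to
zero; and the eigenvalue `N+1` has multiplicity exactly `N`. -/
theorem flag_complex_top_eigenvalue (n N : ℕ) (hN : 1 ≤ N)
    (hV : Module.finrank F V = n + 2) [Fintype (Submodule F V)]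
    (Fl : Finset (Submodule F V)) (hF : IsFlag Fl) (hcard : Fl.card + N = n) :
    (∀ cf : ℕ → ℝ,
      (∑ α ∈ (Finset.Icc 1 (n + 1)).filter
          (fun α => ∀ U ∈ Fl, Module.finrank F ↥U ≠ α), cf α) = 0 →
      ∀ f : Submodule F V → ℝ,
        (∀ W, VertF Fl W → f W = cf (Module.finrank F ↥W)) →
        ∀ W, VertF Fl W → lapF F n Fl f W = ((N : ℝ) + 1) * f W) ∧
    (∀ f : Submodule F V → ℝ, (∀ W, VertF Fl W → lapF F n Fl f W = 0) →
      ∃ c : ℝ, ∀ W, VertF Fl W → f W = c) ∧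
    (∀ f : Submodule F V → ℝ,
      (∀ W, VertF Fl W → lapF F n Fl f W = ((N : ℝ) + 1) * f W) →
      ∃ cf : ℕ → ℝ,
        (∀ W, VertF Fl W → f W = cf (Module.finrank F ↥W)) ∧
        (∑ α ∈ (Finset.Icc 1 (n + 1)).filter
            (fun α => ∀ U ∈ Fl, Module.finrank F ↥U ≠ α), cf α) = 0) ∧
    (∃ g : Fin N → (Submodule F V → ℝ),
      LinearIndependent ℝ g ∧
      (∀ k, (∀ W, ¬ VertF Fl W → g k W = 0) ∧
        ∀ W, VertF Fl W → lapF F n Fl (g k) W = ((N : ℝ) + 1) * g k W) ∧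
      ∀ f : Submodule F V → ℝ, (∀ W, ¬ VertF Fl W → f W = 0) →
        (∀ W, VertF Fl W → lapF F n Fl f W = ((N : ℝ) + 1) * f W) →
        f ∈ Submodule.span ℝ (Set.range g)) := by
  haveI hFD : FiniteDimensional F V := FiniteDimensional.of_finrank_pos (by rw [hV]; omega)
  have hTeq : (Finset.Icc 1 (n + 1)).filter
      (fun α => ∀ U ∈ Fl, Module.finrank F ↥U ≠ α) = Tset n Fl := by
    ext a
    simp only [Finset.mem_filter, mem_Tset]
  have hTcard : (Tset n Fl).card = N + 1 := card_Tset hV hF hcard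
  obtain ⟨C₀, hC₀f, hC₀cd, hC₀sub⟩ := flag_extend hV Fl hF
  have hC₀mem : C₀ ∈ Chamb n Fl := mem_Chamb.mpr ⟨hC₀f, hC₀cd, hC₀sub⟩
  -- Part 1
  have P1 : ∀ cf : ℕ → ℝ, (∑ α ∈ Tset n Fl, cf α) = 0 →
      ∀ f : Submodule F V → ℝ, (∀ W, VertF Fl W → f W = cf (finrank F ↥W)) →
      ∀ W, VertF Fl W → lapF F n Fl f W = ((N : ℝ) + 1) * f W := by
    intro cf hsum f hfc W hW
    rw [lapF_eq hV hF hcard f hW]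
    have hzero : ∀ C ∈ Chamb n (insert W Fl), ∑ α ∈ Tset n Fl, f (memd α C) = 0 := by
      intro C hCm
      obtain ⟨h1, h2, h3⟩ := mem_Chamb.mp hCm
      have hFlC : Fl ⊆ C := (Finset.subset_insert W Fl).trans h3
      have hterm : ∀ α ∈ Tset n Fl, f (memd α C) = cf α := by
        intro α hα
        have hm := memd_mem (h1.exists_rk hV h2 (Tset_subset_Icc hα))
        have hvert : VertF Fl (memd α C) :=
          vert_of_chamb h1 hFlC hm.1 (by rw [hm.2]; exact hα)
        rw [hfc _ hvert, hm.2]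
      rw [Finset.sum_congr rfl hterm, hsum]
    rw [Finset.sum_congr rfl hzero, Finset.sum_const, smul_zero, zero_div, sub_zero]
  -- key consequence of the N+1 eigen equation
  have keyN : ∀ f : Submodule F V → ℝ,
      (∀ W, VertF Fl W → lapF F n Fl f W = ((N : ℝ) + 1) * f W) →
      ∀ W, VertF Fl W →
      (∑ C ∈ Chamb n (insert W Fl), ∑ α ∈ Tset n Fl, f (memd α C)) = 0 := by
    intro f hfe W hW
    have h1 := hfe W hW
    rw [lapF_eq hV hF hcard f hW] at h1
    have hwne : ((flagCount F n (insert W Fl) : ℝ)) ≠ 0 := by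
      have := flagCount_pos hV hW.2
      positivity
    have h2 : (∑ C ∈ Chamb n (insert W Fl), ∑ α ∈ Tset n Fl, f (memd α C)) /
        ((flagCount F n (insert W Fl) : ℝ)) = 0 := by linarith
    rcases div_eq_zero_iff.mp h2 with h | h
    · exact h
    · exact absurd h hwne
  -- key consequence of the 0 eigen equation
  have key0 : ∀ f : Submodule F V → ℝ,
      (∀ W, VertF Fl W → lapF F n Fl f W = 0) →
      ∀ W, VertF Fl W →
      (∑ C ∈ Chamb n (insert W Fl), ∑ α ∈ Tset n Fl, f (memd α C)) =
        ((N : ℝ) + 1) * f W * (flagCount F n (insert W Fl) : ℝ) := by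
    intro f hfe W hW
    have h1 := hfe W hW
    rw [lapF_eq hV hF hcard f hW] at h1
    have hwne : ((flagCount F n (insert W Fl) : ℝ)) ≠ 0 := by
      have := flagCount_pos hV hW.2
      positivity
    have h2 : (∑ C ∈ Chamb n (insert W Fl), ∑ α ∈ Tset n Fl, f (memd α C)) /
        ((flagCount F n (insert W Fl) : ℝ)) = ((N : ℝ) + 1) * f W := by linarith
    rw [div_eq_iff hwne] at h2
    rw [h2]
  -- the square trick: Φ vanishes identically for an N+1 eigenfunction
  have PhiZero : ∀ f : Submodule F V → ℝ,
      (∀ W, VertF Fl W → lapF F n Fl f W = ((N : ℝ) + 1) * f W) →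
      ∀ C ∈ Chamb n Fl, ∑ α ∈ Tset n Fl, f (memd α C) = 0 := by
    intro f hfe
    have hsq : ∑ C ∈ Chamb n Fl, (∑ α ∈ Tset n Fl, f (memd α C))^2 = 0 := by
      have step1 : ∑ C ∈ Chamb n Fl, (∑ α ∈ Tset n Fl, f (memd α C))^2
          = ∑ α ∈ Tset n Fl, ∑ C ∈ Chamb n Fl,
            f (memd α C) * (∑ β ∈ Tset n Fl, f (memd β C)) := by
        refine Eq.trans (Finset.sum_congr rfl fun C _ => ?_) Finset.sum_comm
        rw [sq, Finset.sum_mul]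
      rw [step1]
      refine Finset.sum_eq_zero fun α hα => ?_
      rw [sum_chamb hV (Tset_subset_Icc hα)
        (fun C => f (memd α C) * (∑ β ∈ Tset n Fl, f (memd β C)))]
      refine Finset.sum_eq_zero fun U hU => ?_
      have hUα : finrank F ↥U = α := (mem_filter.mp hU).2
      have hfib : ∀ C ∈ Chamb n (insert U Fl),
          f (memd α C) * (∑ β ∈ Tset n Fl, f (memd β C))
            = f U * (∑ β ∈ Tset n Fl, f (memd β C)) := by
        intro C hCm
        obtain ⟨h1, h2, h3⟩ := mem_Chamb.mp hCm
        rw [h1.memd_eq (h3 (Finset.mem_insert_self U Fl)) hUα]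
      rw [Finset.sum_congr rfl hfib, ← Finset.mul_sum]
      rcases (Chamb n (insert U Fl)).eq_empty_or_nonempty with he | hne
      · rw [he]
        simp
      · obtain ⟨C, hCm⟩ := hne
        obtain ⟨h1, h2, h3⟩ := mem_Chamb.mp hCm
        have hvert : VertF Fl U := vert_of_chamb h1
          ((Finset.subset_insert U Fl).trans h3) (h3 (Finset.mem_insert_self U Fl))
          (by rw [hUα]; exact hα)
        rw [keyN f hfe U hvert, mul_zero]
    intro C hCm
    have h := (Finset.sum_eq_zero_iff_of_nonneg (fun C _ => sq_nonneg _)).mp hsq C hCm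
    exact sq_eq_zero_iff.mp h
  -- Part 3 (with T-sum)
  have P3 : ∀ f : Submodule F V → ℝ,
      (∀ W, VertF Fl W → lapF F n Fl f W = ((N : ℝ) + 1) * f W) →
      ∃ cf : ℕ → ℝ, (∀ W, VertF Fl W → f W = cf (finrank F ↥W)) ∧
        (∑ α ∈ Tset n Fl, cf α) = 0 := by
    intro f hfe
    have hPhi0 := PhiZero f hfe
    have hedge : ∀ α ∈ Tset n Fl, ∀ C C', C ∈ Chamb n Fl → C' ∈ Chamb n Fl → AdjC C C' →
        f (memd α C) = f (memd α C') := by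
      intro α hα C C' hCm hC'm hadj
      rcases adj_cases hV hCm hC'm hadj with he | ⟨β, hβ, hother⟩
      · rw [he]
      rcases eq_or_ne α β with rfl | hne
      · have e1 : f (memd α C) + ∑ γ ∈ (Tset n Fl).erase α, f (memd γ C) = 0 := by
          have h5 := hPhi0 C hCm
          rwa [← Finset.add_sum_erase _ (fun γ => f (memd γ C)) hα] at h5
        have e2 : f (memd α C') + ∑ γ ∈ (Tset n Fl).erase α, f (memd γ C') = 0 := by
          have h5 := hPhi0 C' hC'm
          rwa [← Finset.add_sum_erase _ (fun γ => f (memd γ C')) hα] at h5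
        have e3 : ∑ γ ∈ (Tset n Fl).erase α, f (memd γ C)
            = ∑ γ ∈ (Tset n Fl).erase α, f (memd γ C') := by
          refine Finset.sum_congr rfl fun γ hγ => ?_
          rw [hother γ (Tset_subset_Icc (Finset.mem_of_mem_erase hγ))
            (Finset.ne_of_mem_erase hγ)]
        linarith
      · rw [hother α (Tset_subset_Icc hα) hne]
    refine ⟨fun α => f (memd α C₀), ?_, hPhi0 C₀ hC₀mem⟩
    intro W hW
    obtain ⟨C, hCf2, hCcd2, hCs2⟩ := flag_extend hV _ hW.2
    have hCm : C ∈ Chamb n Fl :=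
      mem_Chamb.mpr ⟨hCf2, hCcd2, (Finset.subset_insert W Fl).trans hCs2⟩
    have hmW : memd (finrank F ↥W) C = W :=
      hCf2.memd_eq (hCs2 (Finset.mem_insert_self W Fl)) rfl
    have hcc : f (memd (finrank F ↥W) C) = f (memd (finrank F ↥W) C₀) :=
      chamb_const hV (g := fun C => f (memd (finrank F ↥W) C))
        (hedge _ (hW.rk_mem hV)) hCm hC₀mem
    rw [hmW] at hcc
    exact hcc
  -- Part 2
  have P2 : ∀ f : Submodule F V → ℝ, (∀ W, VertF Fl W → lapF F n Fl f W = 0) →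
      ∃ c : ℝ, ∀ W, VertF Fl W → f W = c := by
    intro f hfe
    have hQ2 : ∀ C ∈ Chamb n Fl, ∀ α ∈ Tset n Fl, ∀ β ∈ Tset n Fl,
        f (memd α C) = f (memd β C) := by
      have hcast : ((Tset n Fl).card : ℝ) = (N : ℝ) + 1 := by
        rw [hTcard]
        push_cast
        ring
      have hA : ∑ C ∈ Chamb n Fl, (∑ α ∈ Tset n Fl, f (memd α C))^2
          = ((N : ℝ) + 1) * ∑ α ∈ Tset n Fl,
            ∑ U ∈ univ.filter (fun U : Submodule F V => finrank F ↥U = α),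
              (flagCount F n (insert U Fl) : ℝ) * (f U)^2 := by
        have step1 : ∑ C ∈ Chamb n Fl, (∑ α ∈ Tset n Fl, f (memd α C))^2
            = ∑ α ∈ Tset n Fl, ∑ C ∈ Chamb n Fl,
              f (memd α C) * (∑ β ∈ Tset n Fl, f (memd β C)) := by
          refine Eq.trans (Finset.sum_congr rfl fun C _ => ?_) Finset.sum_comm
          rw [sq, Finset.sum_mul]
        rw [step1, Finset.mul_sum]
        refine Finset.sum_congr rfl fun α hα => ?_
        rw [sum_chamb hV (Tset_subset_Icc hα)
          (fun C => f (memd α C) * (∑ β ∈ Tset n Fl, f (memd β C))), Finset.mul_sum]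
        refine Finset.sum_congr rfl fun U hU => ?_
        have hUα : finrank F ↥U = α := (mem_filter.mp hU).2
        have hfib : ∀ C ∈ Chamb n (insert U Fl),
            f (memd α C) * (∑ β ∈ Tset n Fl, f (memd β C))
              = f U * (∑ β ∈ Tset n Fl, f (memd β C)) := by
          intro C hCm
          obtain ⟨h1, h2, h3⟩ := mem_Chamb.mp hCm
          rw [h1.memd_eq (h3 (Finset.mem_insert_self U Fl)) hUα]
        rw [Finset.sum_congr rfl hfib, ← Finset.mul_sum]
        rcases (Chamb n (insert U Fl)).eq_empty_or_nonempty with he | hne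
        · rw [he]
          have hfc0 : flagCount F n (insert U Fl) = 0 := by
            rw [flagCount_eq, he, Finset.card_empty]
          rw [hfc0]
          simp
        · obtain ⟨C, hCm⟩ := hne
          obtain ⟨h1, h2, h3⟩ := mem_Chamb.mp hCm
          have hvert : VertF Fl U := vert_of_chamb h1
            ((Finset.subset_insert U Fl).trans h3) (h3 (Finset.mem_insert_self U Fl))
            (by rw [hUα]; exact hα)
          rw [key0 f hfe U hvert]
          ring
      have hB : ∑ C ∈ Chamb n Fl,
          (((Tset n Fl).card : ℝ) * ∑ α ∈ Tset n Fl, (f (memd α C))^2)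
          = ((N : ℝ) + 1) * ∑ α ∈ Tset n Fl,
            ∑ U ∈ univ.filter (fun U : Submodule F V => finrank F ↥U = α),
              (flagCount F n (insert U Fl) : ℝ) * (f U)^2 := by
        rw [← Finset.mul_sum, hcast]
        congr 1
        rw [Finset.sum_comm]
        refine Finset.sum_congr rfl fun α hα => ?_
        rw [sum_chamb hV (Tset_subset_Icc hα) (fun C => (f (memd α C))^2)]
        refine Finset.sum_congr rfl fun U hU => ?_
        have hUα : finrank F ↥U = α := (mem_filter.mp hU).2
        have hfib : ∀ C ∈ Chamb n (insert U Fl), (f (memd α C))^2 = (f U)^2 := by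
          intro C hCm
          obtain ⟨h1, h2, h3⟩ := mem_Chamb.mp hCm
          rw [h1.memd_eq (h3 (Finset.mem_insert_self U Fl)) hUα]
        rw [Finset.sum_congr rfl hfib, Finset.sum_const, flagCount_eq, nsmul_eq_mul]
      have hsum0 : ∑ C ∈ Chamb n Fl,
          ((((Tset n Fl).card : ℝ) * ∑ α ∈ Tset n Fl, (f (memd α C))^2)
            - (∑ α ∈ Tset n Fl, f (memd α C))^2) = 0 := by
        rw [Finset.sum_sub_distrib, hA, hB, sub_self]
      intro C hCm
      refine sq_eq_const ?_
      refine (Finset.sum_eq_zero_iff_of_nonneg ?_).mp hsum0 C hCm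
      intro C _
      have := sq_le_card (Tset n Fl) (fun α => f (memd α C))
      linarith
    have hTne : (Tset n Fl).Nonempty := Finset.card_pos.mp (by rw [hTcard]; omega)
    set α₀ := (Tset n Fl).min' hTne with hα₀def
    have hα₀ : α₀ ∈ Tset n Fl := Finset.min'_mem _ _
    have hedge : ∀ C C', C ∈ Chamb n Fl → C' ∈ Chamb n Fl → AdjC C C' →
        f (memd α₀ C) = f (memd α₀ C') := by
      intro C C' hCm hC'm hadj
      rcases adj_cases hV hCm hC'm hadj with he | ⟨β, hβ, hother⟩
      · rw [he]
      obtain ⟨γ, hγT, hγβ⟩ := Finset.exists_mem_ne (s := Tset n Fl)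
        (by rw [hTcard]; omega) β
      calc f (memd α₀ C) = f (memd γ C) := hQ2 C hCm α₀ hα₀ γ hγT
        _ = f (memd γ C') := by rw [hother γ (Tset_subset_Icc hγT) hγβ]
        _ = f (memd α₀ C') := hQ2 C' hC'm γ hγT α₀ hα₀
    refine ⟨f (memd α₀ C₀), ?_⟩
    intro W hW
    obtain ⟨C, hCf2, hCcd2, hCs2⟩ := flag_extend hV _ hW.2
    have hCm : C ∈ Chamb n Fl :=
      mem_Chamb.mpr ⟨hCf2, hCcd2, (Finset.subset_insert W Fl).trans hCs2⟩
    have hmW : memd (finrank F ↥W) C = W :=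
      hCf2.memd_eq (hCs2 (Finset.mem_insert_self W Fl)) rfl
    calc f W = f (memd (finrank F ↥W) C) := by rw [hmW]
      _ = f (memd α₀ C) := hQ2 C hCm _ (hW.rk_mem hV) _ hα₀
      _ = f (memd α₀ C₀) := chamb_const hV hedge hCm hC₀mem
  refine ⟨?_, P2, ?_, ?_⟩
  · intro cf hsum f hfc W hW
    rw [hTeq] at hsum
    exact P1 cf hsum f hfc W hW
  · intro f hfe
    obtain ⟨cf, h1, h2⟩ := P3 f hfe
    refine ⟨cf, h1, ?_⟩
    rw [hTeq]
    exact h2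
  · -- Part 4
    set e := (Tset n Fl).orderIsoOfFin hTcard with he
    set t : Fin (N + 1) → ℕ := fun i => (e i : ℕ) with ht
    have htmem : ∀ i, t i ∈ Tset n Fl := fun i => (e i).2
    have htinj : Function.Injective t := fun i j h => e.injective (Subtype.ext h)
    have hvert : ∀ i : Fin (N + 1), VertF Fl (memd (t i) C₀) ∧
        finrank F ↥(memd (t i) C₀) = t i := by
      intro i
      have hm := memd_mem (hC₀f.exists_rk hV hC₀cd (Tset_subset_Icc (htmem i)))
      exact ⟨vert_of_chamb hC₀f hC₀sub hm.1 (by rw [hm.2]; exact htmem i), hm.2⟩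
    set g : Fin N → (Submodule F V → ℝ) := fun k U =>
      if VertF Fl U then
        ((if finrank F ↥U = t k.succ then (1 : ℝ) else 0)
          - (if finrank F ↥U = t 0 then (1 : ℝ) else 0))
      else 0 with hgdef
    have hgzero : ∀ k W, ¬ VertF Fl W → g k W = 0 := by
      intro k W hW
      rw [hgdef]
      simp only [if_neg hW]
    have hgvert : ∀ k W, VertF Fl W → g k W =
        (if finrank F ↥W = t k.succ then (1 : ℝ) else 0)
          - (if finrank F ↥W = t 0 then (1 : ℝ) else 0) := by
      intro k W hW
      rw [hgdef]
      simp only [if_pos hW]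
    have hcfsum : ∀ k : Fin N, ∑ α ∈ Tset n Fl,
        ((if α = t k.succ then (1 : ℝ) else 0) - (if α = t 0 then (1 : ℝ) else 0)) = 0 := by
      intro k
      rw [Finset.sum_sub_distrib, Finset.sum_ite_eq' (Tset n Fl) (t k.succ) (fun _ => (1:ℝ)),
        Finset.sum_ite_eq' (Tset n Fl) (t 0) (fun _ => (1:ℝ)),
        if_pos (htmem k.succ), if_pos (htmem 0), sub_self]
    have hgeig : ∀ k, ∀ W, VertF Fl W →
        lapF F n Fl (g k) W = ((N : ℝ) + 1) * g k W := by
      intro k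
      refine P1 (fun α => (if α = t k.succ then (1 : ℝ) else 0)
        - (if α = t 0 then (1 : ℝ) else 0)) (hcfsum k) (g k) ?_
      intro W hW
      rw [hgvert k W hW]
    refine ⟨g, ?_, fun k => ⟨hgzero k, hgeig k⟩, ?_⟩
    · -- linear independence
      refine Fintype.linearIndependent_iff.mpr ?_
      intro a ha j
      have hev := congrFun ha (memd (t j.succ) C₀)
      simp only [Finset.sum_apply, Pi.smul_apply, smul_eq_mul, Pi.zero_apply] at hev
      have hgval : ∀ k : Fin N, g k (memd (t j.succ) C₀) = if k = j then (1:ℝ) else 0 := by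
        intro k
        rw [hgvert k _ (hvert j.succ).1, (hvert j.succ).2]
        have h0 : t j.succ ≠ t 0 := fun h => (Fin.succ_ne_zero j) (htinj h)
        rw [if_neg h0, sub_zero]
        by_cases hkj : k = j
        · rw [hkj, if_pos rfl, if_pos rfl]
        · rw [if_neg (fun h => hkj (Fin.succ_injective _ (htinj h)).symm), if_neg hkj]
      have hterm : ∀ k : Fin N, a k * g k (memd (t j.succ) C₀)
          = if k = j then a k else 0 := by
        intro k
        rw [hgval k]
        by_cases hkj : k = j
        · rw [if_pos hkj, if_pos hkj, mul_one]
        · rw [if_neg hkj, if_neg hkj, mul_zero]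
      have hev2 : ∑ k : Fin N, (if k = j then a k else 0) = 0 := by
        rw [← Finset.sum_congr rfl (fun k _ => hterm k)]
        exact hev
      rwa [Finset.sum_ite_eq' univ j a, if_pos (mem_univ j)] at hev2
    · -- spanning
      intro f hsupp hfe
      obtain ⟨cf, hfc, hsum⟩ := P3 f hfe
      have hsb : ∑ i : Fin (N + 1), cf (t i) = ∑ α ∈ Tset n Fl, cf α := by
        refine Finset.sum_bij (fun i _ => t i) (fun i _ => htmem i)
          (fun i _ j _ h => htinj h) ?_ (fun i _ => rfl)
        intro α hα
        obtain ⟨i, hi⟩ := e.surjective ⟨α, hα⟩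
        exact ⟨i, mem_univ i, congrArg Subtype.val hi⟩
      have h4 : cf (t 0) + ∑ k : Fin N, cf (t (Fin.succ k)) = 0 := by
        rw [← Fin.sum_univ_succ (fun i => cf (t i)), hsb]
        exact hsum
      have hrepr : f = ∑ k : Fin N, cf (t k.succ) • g k := by
        funext U
        rw [Finset.sum_apply]
        simp only [Pi.smul_apply, smul_eq_mul]
        by_cases hU : VertF Fl U
        · have hrkT : finrank F ↥U ∈ Tset n Fl := hU.rk_mem hV
          obtain ⟨i, hi⟩ := e.surjective ⟨_, hrkT⟩
          have hti : t i = finrank F ↥U := congrArg Subtype.val hi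
          have hgU : ∀ k, g k U = (if t i = t k.succ then (1:ℝ) else 0)
              - (if t i = t 0 then (1:ℝ) else 0) := by
            intro k
            rw [hgvert k U hU, ← hti]
          rw [hfc U hU, ← hti]
          rcases Fin.eq_zero_or_eq_succ i with hi0 | ⟨j, hij⟩
          · subst hi0
            have hterm : ∀ k : Fin N, cf (t k.succ) * g k U = -(cf (t k.succ)) := by
              intro k
              rw [hgU k, if_neg (fun h => (Fin.succ_ne_zero k) (htinj h).symm),
                if_pos rfl]
              ring
            rw [Finset.sum_congr rfl (fun k _ => hterm k)]
            rw [Finset.sum_neg_distrib]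
            linarith
          · subst hij
            have hterm : ∀ k : Fin N, cf (t k.succ) * g k U
                = if k = j then cf (t j.succ) else 0 := by
              intro k
              rw [hgU k, if_neg (fun h => (Fin.succ_ne_zero j) (htinj h))]
              by_cases hkj : k = j
              · subst hkj
                rw [if_pos rfl, if_pos rfl]
                ring
              · rw [if_neg (fun h => hkj (Fin.succ_injective _ (htinj h)).symm),
                  if_neg hkj]
                ring
            rw [Finset.sum_congr rfl (fun k _ => hterm k),
              Finset.sum_ite_eq' univ j (fun _ => cf (t j.succ)), if_pos (mem_univ j)]
        · rw [hsupp U hU]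
          symm
          refine Finset.sum_eq_zero fun k _ => ?_
          rw [hgzero k U hU, mul_zero]
      rw [hrepr]
      exact Submodule.sum_mem _ (fun k _ =>
        Submodule.smul_mem _ _ (Submodule.subset_span ⟨k, rfl⟩))

end
end
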